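/- arXiv:1704.05254 — 2 statements merged into one kernel-verified Lean document; each statement's English description precedes it below -/
import Mathlib

section
/- There is a constant c such that for all n ≥ 1 and k ≥ 1 there exists an SL-HR grammar G with val(G) isomorphic to g_{n,k} and |G| ≤ c·(k² + n). (This is the existence content of the claim that gRePair, when the allowed maximal rank is at least k, produces for g_{n,k} a grammar of size O(k² + n).) -/
open scoped Classical

/-- A hypergraph over a label type `L`: nodes and edges are natural-number
identifiers, `att` gives the attachment sequence of an edge, `lab` its label,
and `ext` is the sequence of external nodes. -/
structure HGraph (L : Type) where
  V : Finset ℕ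
  E : Finset ℕ
  att : ℕ → List ℕ
  lab : ℕ → L
  ext : List ℕ

namespace HGraph

variable {L : Type}

/-- Well-formedness of a hypergraph over a ranked alphabet `rk`:
nodes nonempty, attachments are nonempty repetition-free sequences of nodes
whose length is the rank of the label, and the external nodes form a
repetition-free sequence of nodes. -/
def WF (rk : L → ℕ) (g : HGraph L) : Prop :=
  g.V.Nonempty ∧
    (∀ e ∈ g.E, (∀ v ∈ g.att e, v ∈ g.V) ∧ (g.att e).Nodup ∧
      (g.att e).length = rk (g.lab e) ∧ g.att e ≠ []) ∧
    (∀ v ∈ g.ext, v ∈ g.V) ∧ g.ext.Nodup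

/-- The edge size `|g|_E`: simple edges (rank ≤ 2) count 1, a hyperedge of
rank `n > 2` counts `n`. -/
def esize (g : HGraph L) : ℕ :=
  ∑ e ∈ g.E, (if (g.att e).length ≤ 2 then 1 else (g.att e).length)

/-- The size `|g| = |g|_V + |g|_E`. -/
def size (g : HGraph L) : ℕ := g.V.card + g.esize

/-- Isomorphism of hypergraphs: bijections on nodes and edges preserving
attachment, labels and external nodes. -/
def Isomorphic (g h : HGraph L) : Prop :=
  ∃ f fe : ℕ → ℕ,
    Set.BijOn f ↑g.V ↑h.V ∧ Set.BijOn fe ↑g.E ↑h.E ∧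
    (∀ e ∈ g.E, h.att (fe e) = (g.att e).map f) ∧
    (∀ e ∈ g.E, h.lab (fe e) = g.lab e) ∧
    h.ext = g.ext.map f

end HGraph

/-- `IsReplacement g e₀ h g'` holds if `g'` is (a realization of) the
replacement `g[e₀/h]`: the edge `e₀` is removed from `g`, a disjoint copy of
`h` (renamed via `ρ` on nodes and `η` on edges) is adjoined, and the i-th
external node of `h` is identified with the i-th attachment node of `e₀`. -/
def IsReplacement {L : Type} (g : HGraph L) (e₀ : ℕ) (h : HGraph L)
    (g' : HGraph L) : Prop :=
  ∃ ρ η : ℕ → ℕ,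
    Set.InjOn ρ ↑h.V ∧ Set.InjOn η ↑h.E ∧
    (∀ v ∈ h.V, v ∉ h.ext → ρ v ∉ g.V) ∧
    h.ext.map ρ = g.att e₀ ∧
    (∀ e ∈ h.E, η e ∉ g.E) ∧
    g'.V = g.V ∪ h.V.image ρ ∧
    g'.E = g.E.erase e₀ ∪ h.E.image η ∧
    (∀ e ∈ g.E.erase e₀, g'.att e = g.att e ∧ g'.lab e = g.lab e) ∧
    (∀ e ∈ h.E, g'.att (η e) = (h.att e).map ρ ∧ g'.lab (η e) = h.lab e) ∧
    g'.ext = g.ext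

/-- An HR grammar over a terminal alphabet `T`: nonterminals are natural
numbers (`NT`), `rkN` gives their ranks, `rhs` the unique right-hand side of
each nonterminal, and `S` is the start graph.  Labels of graphs occurring in
the grammar are `T ⊕ ℕ` (terminals on the left, nonterminals on the right). -/
structure HRGrammar (T : Type) where
  NT : Finset ℕ
  rkN : ℕ → ℕ
  rhs : ℕ → HGraph (T ⊕ ℕ)
  S : HGraph (T ⊕ ℕ)

namespace HRGrammar

variable {T : Type}

/-- The rank function on labels `T ⊕ ℕ` induced by terminal ranks `rkT`. -/
def rk (G : HRGrammar T) (rkT : T → ℕ) : T ⊕ ℕ → ℕ := Sum.elim rkT G.rkN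

/-- Well-formedness of an HR grammar over ranked alphabet `rkT`:
all ranks are ≥ 1, the start graph and all right-hand sides are well-formed,
`rank(A) = rank(rhs A)` for all nonterminals, and all nonterminal labels
occurring in the grammar are declared nonterminals. -/
def WF (G : HRGrammar T) (rkT : T → ℕ) : Prop :=
  (∀ a : T, 1 ≤ rkT a) ∧ (∀ A ∈ G.NT, 1 ≤ G.rkN A) ∧
    G.S.WF (G.rk rkT) ∧
    (∀ A ∈ G.NT, (G.rhs A).WF (G.rk rkT) ∧ (G.rhs A).ext.length = G.rkN A) ∧
    (∀ e ∈ G.S.E, ∀ B : ℕ, G.S.lab e = Sum.inr B → B ∈ G.NT) ∧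
    (∀ A ∈ G.NT, ∀ e ∈ (G.rhs A).E, ∀ B : ℕ, (G.rhs A).lab e = Sum.inr B → B ∈ G.NT)

/-- The dependency relation: `dep G A B` iff a `B`-labeled edge occurs in
`rhs(A)`. -/
def dep (G : HRGrammar T) (A B : ℕ) : Prop :=
  A ∈ G.NT ∧ B ∈ G.NT ∧ ∃ e ∈ (G.rhs A).E, (G.rhs A).lab e = Sum.inr B

/-- Straight-line condition: the dependency relation is acyclic, and every
nonterminal occurs in some derivation from the start graph (i.e., it is
reachable, via dependencies, from a nonterminal occurring in `S`).  (Every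
nonterminal has exactly one rule by construction, since `rhs` is a
function.) -/
def SL (G : HRGrammar T) : Prop :=
  (∀ A : ℕ, ¬ Relation.TransGen G.dep A A) ∧
    (∀ A ∈ G.NT, ∃ B : ℕ, (∃ e ∈ G.S.E, G.S.lab e = Sum.inr B) ∧
      Relation.ReflTransGen G.dep B A)

/-- One derivation step: replace some nonterminal edge by its right-hand
side. -/
def Derive (G : HRGrammar T) (g g' : HGraph (T ⊕ ℕ)) : Prop :=
  ∃ e ∈ g.E, ∃ A ∈ G.NT, g.lab e = Sum.inr A ∧ IsReplacement g e (G.rhs A) g'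

/-- A graph is terminal if all its edge labels are terminal symbols. -/
def Terminal (g : HGraph (T ⊕ ℕ)) : Prop :=
  ∀ e ∈ g.E, ∃ a : T, g.lab e = Sum.inl a

/-- The language of the grammar: all terminal graphs derivable from `S`. -/
def Lang (G : HRGrammar T) : Set (HGraph (T ⊕ ℕ)) :=
  { g | Relation.ReflTransGen G.Derive G.S g ∧ Terminal g }

/-- The size `|G| = |S| + Σ_{(A,g) ∈ P} |g|`. -/
def size (G : HRGrammar T) : ℕ :=
  G.S.size + ∑ A ∈ G.NT, (G.rhs A).size

end HRGrammar

/-- A ranked ordered tree given by its finite set `D` of Dewey addresses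
(children of `u` are `u ++ [1], …, u ++ [m]`) together with a labeling of the
addresses. -/
structure RankedTree (L : Type) where
  D : Finset (List ℕ)
  lab : List ℕ → L

namespace RankedTree

variable {L : Type}

/-- Well-formedness of a ranked tree relative to the (hypergraph) rank
function `rk` on labels: a symbol of rank `m + 1` has exactly `m` children
(a tree node labeled `σ` has children `1, …, rk σ - 1`). -/
def WF (rk : L → ℕ) (t : RankedTree L) : Prop :=
  [] ∈ t.D ∧
    (∀ (u : List ℕ) (i : ℕ), u ++ [i] ∈ t.D →
      u ∈ t.D ∧ 1 ≤ i ∧ i ≤ rk (t.lab u) - 1) ∧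
    (∀ u ∈ t.D, ∀ i : ℕ, 1 ≤ i → i ≤ rk (t.lab u) - 1 → u ++ [i] ∈ t.D)

/-- The preorder (lexicographic) position of an address among the addresses
of the tree. -/
noncomputable def pos (t : RankedTree L) (u : List ℕ) : ℕ :=
  (t.D.filter fun v => List.Lex (· < ·) v u).card

end RankedTree

/-- `IsTGraphOf rk t g` holds if `g` is the tree-graph `t-graph(t)`: one node
per tree node (numbered in preorder), one hyperedge per tree node, labeled by
the node's symbol and attached first to the node itself and then to its
children in order, the root being the unique external node. -/
def IsTGraphOf {L : Type} (rk : L → ℕ) (t : RankedTree L) (g : HGraph L) : Prop :=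
  g.V = Finset.range t.D.card ∧ g.E = Finset.range t.D.card ∧
    (∀ u ∈ t.D,
      g.att (t.pos u) =
        t.pos u :: (List.range (rk (t.lab u) - 1)).map (fun j => t.pos (u ++ [j + 1])) ∧
      g.lab (t.pos u) = t.lab u) ∧
    g.ext = [t.pos []]

/-- A hypergraph is a tree-graph if it is (isomorphic to) `t-graph(t)` for
some well-formed ranked tree `t`. -/
def IsTreeGraph {L : Type} (rk : L → ℕ) (g : HGraph L) : Prop :=
  ∃ t : RankedTree L, t.WF rk ∧
    ∃ g₀ : HGraph L, IsTGraphOf rk t g₀ ∧ g.Isomorphic g₀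

/-- The address set of the right comb `s_{n,k}`: `f_k`-nodes at addresses
`k^j` (`j < 2^n`, i.e., `replicate j k`), `a`-leaves as children `1, …, k-1`
of every `f_k`-node, plus the `k`-th child of the last `f_k`-node. -/
def combD (n k : ℕ) : Finset (List ℕ) :=
  ((Finset.range (2 ^ n)).image fun j => List.replicate j k) ∪
    ((Finset.range (2 ^ n) ×ˢ Finset.range (k - 1)).image
      fun p => List.replicate p.1 k ++ [p.2 + 1]) ∪
    {List.replicate (2 ^ n) k}

/-- The labeling of `s_{n,k}`: the comb nodes (`replicate j k`, `j < 2^n`)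
are labeled `f_k` (encoded as `true`), all other nodes are `a`-leaves
(encoded as `false`). -/
def combLab (n k : ℕ) : List ℕ → Bool ⊕ ℕ := fun u =>
  if u = List.replicate u.length k ∧ u.length < 2 ^ n then Sum.inl true
  else Sum.inl false

/-- The ranked tree `s_{n,k}` over the alphabet `{f_k, a}` (with
`f_k = true`, `a = false`). -/
def combTree (n k : ℕ) : RankedTree (Bool ⊕ ℕ) := ⟨combD n k, combLab n k⟩

/-- The (hypergraph) rank function for `g_{n,k}`: an `f_k`-labeled hyperedge
has rank `k + 1` (node plus `k` children), an `a`-labeled hyperedge has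
rank 1. -/
def combRk (k : ℕ) : Bool ⊕ ℕ → ℕ :=
  Sum.elim (fun b => if b then k + 1 else 1) fun _ => 1

section CombAux

open List Function

variable {n k : ℕ}

lemma lexApp {r : ℕ → ℕ → Prop} (l : List ℕ) (x : ℕ) (t : List ℕ) :
    List.Lex r l (l ++ x :: t) := by
  induction l with
  | nil => exact List.Lex.nil
  | cons a l ih => exact List.Lex.cons ih

lemma lexApp2 {r : ℕ → ℕ → Prop} (l : List ℕ) {a b : ℕ} (h : r a b) (t₁ t₂ : List ℕ) :
    List.Lex r (l ++ a :: t₁) (l ++ b :: t₂) := by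
  induction l with
  | nil => exact List.Lex.rel h
  | cons c l ih => exact List.Lex.cons ih

def ordL (k m : ℕ) : List ℕ :=
  List.replicate (m / k) k ++ (if m % k = 0 then [] else [m % k])

lemma ordL_eq (hk : 0 < k) (j i : ℕ) (hi : i < k) :
    ordL k (j * k + i) = List.replicate j k ++ (if i = 0 then [] else [i]) := by
  have h1 : (j * k + i) / k = j := by
    rw [mul_comm, Nat.mul_add_div hk, Nat.div_eq_of_lt hi, add_zero]
  have h2 : (j * k + i) % k = i := by
    rw [mul_comm, Nat.mul_add_mod, Nat.mod_eq_of_lt hi]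
  rw [ordL, h1, h2]

lemma ordL_succ (hk : 0 < k) (m : ℕ) : List.Lex (· < ·) (ordL k m) (ordL k (m + 1)) := by
  have hm := Nat.div_add_mod m k
  have hik : m % k < k := Nat.mod_lt _ hk
  set j := m / k with hj
  set i := m % k with hi
  have hm' : m = j * k + i := by rw [mul_comm]; omega
  have e1 : ordL k m = replicate j k ++ (if i = 0 then [] else [i]) := by
    rw [hm', ordL_eq hk j i hik]
  by_cases hik1 : i + 1 < k
  · have e2 : ordL k (m + 1) = replicate j k ++ [i + 1] := by
      have h3 : m + 1 = j * k + (i + 1) := by omega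
      rw [h3, ordL_eq hk j (i + 1) hik1, if_neg (Nat.succ_ne_zero i)]
    rw [e1, e2]
    by_cases hi0 : i = 0
    · rw [if_pos hi0, append_nil]; exact lexApp _ _ _
    · rw [if_neg hi0]; exact lexApp2 _ (by omega) _ _
  · have hk1 : i + 1 = k := by omega
    have e2 : ordL k (m + 1) = replicate j k ++ [k] := by
      have h3 : m + 1 = (j + 1) * k + 0 := by rw [add_mul, one_mul]; omega
      rw [h3, ordL_eq hk (j + 1) 0 hk, if_pos rfl, append_nil, List.replicate_succ']
    rw [e1, e2]
    by_cases hi0 : i = 0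
    · rw [if_pos hi0, append_nil]; exact lexApp _ _ _
    · rw [if_neg hi0]; exact lexApp2 _ (by omega) _ _

lemma ordL_lt (hk : 0 < k) {m m' : ℕ} (h : m < m') :
    List.Lex (· < ·) (ordL k m) (ordL k m') := by
  induction m' with
  | zero => omega
  | succ m'' ih =>
    rcases Nat.lt_succ_iff_lt_or_eq.mp h with h' | h'
    · exact List.lt_trans (ih h') (ordL_succ hk m'')
    · rw [h']; exact ordL_succ hk m''

lemma ordL_inj (hk : 0 < k) : Function.Injective (ordL k) := by
  intro m m' h
  by_contra hne
  rcases Nat.lt_or_ge m m' with hlt | hge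
  · have h2 := ordL_lt hk hlt; rw [h] at h2
    exact absurd h2 (irrefl_of (List.Lex (· < ·)) _)
  · have hlt : m' < m := by omega
    have h2 := ordL_lt hk hlt; rw [h] at h2
    exact absurd h2 (irrefl_of (List.Lex (· < ·)) _)

lemma combD_eq (hk : 0 < k) :
    combD n k = (Finset.range (2 ^ n * k + 1)).image (ordL k) := by
  have hkle : 1 * k ≤ 2 ^ n * k := Nat.mul_le_mul_right k Nat.one_le_two_pow
  rw [one_mul] at hkle
  ext u
  simp only [combD, Finset.mem_union, Finset.mem_image, Finset.mem_singleton,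
    Finset.mem_product, Finset.mem_range]
  constructor
  · rintro ((⟨j, hj, rfl⟩ | ⟨⟨j, i⟩, ⟨hj, hi⟩, rfl⟩) | rfl)
    · refine ⟨j * k, ?_, ?_⟩
      · have := Nat.mul_le_mul_right k (Nat.le_of_lt hj); omega
      · have := ordL_eq hk j 0 hk
        rw [add_zero] at this; rw [this, if_pos rfl, append_nil]
    · refine ⟨j * k + (i + 1), ?_, ?_⟩
      · have h1 : j * k + k ≤ 2 ^ n * k := by
          have h2 : (j + 1) * k ≤ 2 ^ n * k := Nat.mul_le_mul_right k (by omega)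
          rw [add_mul, one_mul] at h2; exact h2
        simp at hj hi; omega
      · rw [ordL_eq hk j (i + 1) (by simp at hi; omega), if_neg (Nat.succ_ne_zero i)]
    · refine ⟨2 ^ n * k, by omega, ?_⟩
      have := ordL_eq hk (2 ^ n) 0 hk
      rw [add_zero] at this; rw [this, if_pos rfl, append_nil]
  · rintro ⟨m, hm, rfl⟩
    have hik : m % k < k := Nat.mod_lt _ hk
    have hmm := Nat.div_add_mod m k
    have hm' : m = (m / k) * k + m % k := by rw [mul_comm]; omega
    have hdle : m / k ≤ 2 ^ n := by
      have h1 : m / k ≤ (2 ^ n * k) / k := Nat.div_le_div_right (by omega)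
      rwa [Nat.mul_div_cancel _ hk] at h1
    by_cases hi0 : m % k = 0
    · rw [hm', hi0, ordL_eq hk _ 0 hk, if_pos rfl, append_nil]
      rcases Nat.lt_or_ge (m / k) (2 ^ n) with hj | hj
      · exact Or.inl (Or.inl ⟨m / k, hj, rfl⟩)
      · have : m / k = 2 ^ n := by omega
        rw [this]; exact Or.inr rfl
    · have hmlt : m < 2 ^ n * k := by
        rcases Nat.lt_or_ge m (2 ^ n * k) with h | h
        · exact h
        · exfalso; have : m = 2 ^ n * k := by omega
          rw [this, Nat.mul_mod_left] at hi0; exact hi0 rfl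
      have hj : m / k < 2 ^ n := (Nat.div_lt_iff_lt_mul hk).mpr hmlt
      refine Or.inl (Or.inr ⟨⟨m / k, m % k - 1⟩, ⟨hj, by omega⟩, ?_⟩)
      have h5 : m % k - 1 + 1 = m % k := by omega
      rw [h5]
      conv_rhs => rw [hm']
      rw [ordL_eq hk _ _ hik, if_neg hi0]

lemma combD_card (hk : 0 < k) : (combD n k).card = 2 ^ n * k + 1 := by
  rw [combD_eq hk, Finset.card_image_of_injective _ (ordL_inj hk), Finset.card_range]

lemma pos_ordL (hk : 0 < k) {m : ℕ} (hm : m < 2 ^ n * k + 1) :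
    (combTree n k).pos (ordL k m) = m := by
  show ((combTree n k).D.filter fun v => List.Lex (· < ·) v (ordL k m)).card = m
  have hD : (combTree n k).D = combD n k := rfl
  rw [hD, combD_eq hk]
  have h1 : ((Finset.range (2 ^ n * k + 1)).image (ordL k)).filter
      (fun v => List.Lex (· < ·) v (ordL k m)) =
      ((Finset.range (2 ^ n * k + 1)).filter (fun a => a < m)).image (ordL k) := by
    ext u
    simp only [Finset.mem_filter, Finset.mem_image, Finset.mem_range]
    constructor
    · rintro ⟨⟨a, ha, rfl⟩, hlex⟩
      refine ⟨a, ⟨ha, ?_⟩, rfl⟩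
      by_contra hge
      rcases Nat.lt_or_ge a m with h | h
      · exact hge h
      · rcases Nat.eq_or_lt_of_le h with h' | h'
        · rw [← h'] at hlex; exact absurd hlex (irrefl_of (List.Lex (· < ·)) _)
        · exact absurd hlex (asymm_of (List.Lex (· < ·)) (ordL_lt hk h'))
    · rintro ⟨a, ⟨ha, ham⟩, rfl⟩
      exact ⟨⟨a, ha, rfl⟩, ordL_lt hk ham⟩
  rw [h1, Finset.card_image_of_injective _ (ordL_inj hk)]
  have h2 : (Finset.range (2 ^ n * k + 1)).filter (fun a => a < m) = Finset.range m := by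
    ext a
    simp only [Finset.mem_filter, Finset.mem_range]
    omega
  rw [h2, Finset.card_range]

end CombAux
section CombAux2

open List Function

variable {n k : ℕ}

/-- one segment of the node-level encoding: `0` is a terminal `f_k`-block
(spine node plus `k-1` leaves), `x+1` is a nonterminal `A_x` edge. -/
def seg (k x : ℕ) : List (Option ℕ) :=
  if x = 0 then some 0 :: List.replicate (k - 1) none else [some x]

def ell (k : ℕ) (w : List ℕ) : List (Option ℕ) := w.flatMap (seg k) ++ [none]

def attF (k : ℕ) (L : List (Option ℕ)) (x : ℕ) : List ℕ :=
  match L.getD x none with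
  | some 0 => x :: (List.range k).map fun j => x + j + 1
  | some (_ + 1) => [x, x + 1]
  | none => [x]

def labF (L : List (Option ℕ)) (x : ℕ) : Bool ⊕ ℕ :=
  match L.getD x none with
  | some 0 => Sum.inl true
  | some (i + 1) => Sum.inr i
  | none => Sum.inl false

def CG (k : ℕ) (L : List (Option ℕ)) : HGraph (Bool ⊕ ℕ) :=
  ⟨Finset.range L.length, Finset.range L.length, attF k L, labF L, [0]⟩

lemma seg_len (hk : 0 < k) (x : ℕ) : (seg k x).length = if x = 0 then k else 1 := by
  unfold seg; split <;> simp <;> omega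

lemma getD_rep_none : ∀ (j i : ℕ), (List.replicate j (none : Option ℕ)).getD i none = none := by
  intro j
  induction j with
  | zero => intro i; simp
  | succ j ih =>
    intro i
    rw [List.replicate_succ]
    cases i with
    | zero => simp
    | succ i' => simpa using ih i'

lemma flat_len (hk : 0 < k) (j : ℕ) :
    ((List.replicate j 0).flatMap (seg k)).length = j * k := by
  induction j with
  | zero => simp
  | succ j ih =>
    rw [List.replicate_succ, List.flatMap_cons, List.length_append, ih, seg_len hk, if_pos rfl,
      Nat.succ_mul]
    omega

lemma flat_getD (hk : 0 < k) : ∀ (j : ℕ) (t : List (Option ℕ)) (x : ℕ),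
    (((List.replicate j 0).flatMap (seg k)) ++ t).getD x none =
      if x < j * k then (if x % k = 0 then some 0 else none) else t.getD (x - j * k) none := by
  intro j
  induction j with
  | zero => intro t x; simp
  | succ j ih =>
    intro t x
    rw [List.replicate_succ, List.flatMap_cons, List.append_assoc]
    have hs : seg k 0 = some 0 :: List.replicate (k - 1) none := if_pos rfl
    have hlen : (seg k 0).length = k := by rw [seg_len hk, if_pos rfl]
    rcases Nat.lt_or_ge x k with hx | hx
    · rw [List.getD_append _ _ _ _ (by omega)]
      rw [hs]
      rcases Nat.eq_zero_or_pos x with rfl | hx0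
      · have h1 : 0 < (j + 1) * k := by positivity
        simp [h1]
      · have h1 : (some 0 :: List.replicate (k - 1) (none : Option ℕ)).getD x none = none := by
          cases x with
          | zero => omega
          | succ x' => simpa using getD_rep_none (k - 1) x'
        rw [h1, if_pos (by rw [Nat.succ_mul]; omega), if_neg (by rw [Nat.mod_eq_of_lt hx]; omega)]
    · rw [List.getD_append_right _ _ _ _ (by omega), hlen, ih t (x - k)]
      have e1 : x % k = (x - k) % k := by
        conv_lhs => rw [show x = (x - k) + k by omega]
        rw [Nat.add_mod_right]
      rw [Nat.succ_mul]
      by_cases h2 : x - k < j * k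
      · rw [if_pos h2, if_pos (show x < j * k + k by omega), e1]
      · rw [if_neg h2, if_neg (show ¬ x < j * k + k by omega)]
        congr 1
        omega

lemma ell_rep_len (hk : 0 < k) :
    (ell k (List.replicate (2 ^ n) 0)).length = 2 ^ n * k + 1 := by
  unfold ell
  rw [List.length_append, flat_len hk]
  simp

/-- the canonical tree-graph of `s_{n,k}` -/
def gComb (n k : ℕ) : HGraph (Bool ⊕ ℕ) := CG k (ell k (List.replicate (2 ^ n) 0))

lemma ell_rep_getD (hk : 0 < k) (x : ℕ) :
    (ell k (List.replicate (2 ^ n) 0)).getD x none =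
      if x < 2 ^ n * k then (if x % k = 0 then some 0 else none) else
        ([(none : Option ℕ)]).getD (x - 2 ^ n * k) none := by
  unfold ell
  rw [flat_getD hk]

theorem gComb_tgraph (hk : 0 < k) : IsTGraphOf (combRk k) (combTree n k) (gComb n k) := by
  have hD : (combTree n k).D = combD n k := rfl
  have hlabT : (combTree n k).lab = combLab n k := rfl
  have hcard : (combTree n k).D.card = 2 ^ n * k + 1 := by rw [hD, combD_card hk]
  refine ⟨?_, ?_, ?_, ?_⟩
  · show Finset.range (ell k (List.replicate (2 ^ n) 0)).length = _
    rw [ell_rep_len hk, hcard]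
  · show Finset.range (ell k (List.replicate (2 ^ n) 0)).length = _
    rw [ell_rep_len hk, hcard]
  · intro u hu
    rw [hD, combD_eq hk] at hu
    simp only [Finset.mem_image, Finset.mem_range] at hu
    obtain ⟨m, hm, rfl⟩ := hu
    rw [hlabT, pos_ordL hk hm]
    by_cases hcase : m % k = 0 ∧ m < 2 ^ n * k
    · obtain ⟨hmod, hmlt⟩ := hcase
      have hu1 : ordL k m = List.replicate (m / k) k := by
        unfold ordL; rw [if_pos hmod, append_nil]
      have hdiv : m / k < 2 ^ n := (Nat.div_lt_iff_lt_mul hk).mpr hmlt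
      have hlab : combLab n k (ordL k m) = Sum.inl true := by
        unfold combLab
        rw [if_pos ⟨by rw [hu1, List.length_replicate], by rw [hu1, List.length_replicate]; exact hdiv⟩]
      have hrk : combRk k (combLab n k (ordL k m)) = k + 1 := by rw [hlab]; rfl
      have hattF : (gComb n k).att m = m :: (List.range k).map fun j => m + j + 1 := by
        show attF k _ m = _
        unfold attF
        rw [ell_rep_getD hk, if_pos hmlt, if_pos hmod]
      have hmk : m / k * k = m := Nat.div_mul_cancel (Nat.dvd_of_mod_eq_zero hmod)
      have hmk2 : m + k ≤ 2 ^ n * k := by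
        have h3 : (m / k + 1) * k ≤ 2 ^ n * k := Nat.mul_le_mul_right k (by omega)
        rw [add_mul, one_mul, hmk] at h3
        exact h3
      constructor
      · rw [hattF, hrk]
        simp only [Nat.add_sub_cancel]
        congr 1
        apply List.map_congr_left
        intro j hj
        rw [List.mem_range] at hj
        have hkey : ordL k m ++ [j + 1] = ordL k (m + j + 1) := by
          rcases Nat.lt_or_ge (j + 1) k with hjk | hjk
          · have h4 : m + j + 1 = m / k * k + (j + 1) := by omega
            rw [h4, ordL_eq hk _ _ hjk, if_neg (Nat.succ_ne_zero j), hu1]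
          · have hjk' : j + 1 = k := by omega
            have h4 : m + j + 1 = (m / k + 1) * k + 0 := by rw [add_mul, one_mul]; omega
            rw [h4, ordL_eq hk _ 0 hk, if_pos rfl, append_nil, List.replicate_succ', hu1, hjk']
        rw [hkey, pos_ordL hk (by omega)]
      · show labF _ m = _
        unfold labF
        rw [ell_rep_getD hk, if_pos hmlt, if_pos hmod, hlab]
    · have hlab : combLab n k (ordL k m) = Sum.inl false := by
        unfold combLab
        rw [if_neg ?_]
        rintro ⟨hrep, hlen⟩
        by_cases hmod : m % k = 0
        · have hmM : m = 2 ^ n * k := by omega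
          have hu1 : ordL k m = List.replicate (m / k) k := by
            unfold ordL; rw [if_pos hmod, append_nil]
          rw [hu1, List.length_replicate] at hlen
          rw [hmM, Nat.mul_div_cancel _ hk] at hlen
          omega
        · have hmem : m % k ∈ ordL k m := by
            unfold ordL
            rw [if_neg hmod]
            simp
          rw [hrep] at hmem
          have := List.eq_of_mem_replicate hmem
          have h5 : m % k < k := Nat.mod_lt _ hk
          omega
      have hrk : combRk k (combLab n k (ordL k m)) = 1 := by rw [hlab]; rfl
      have hgd : (ell k (List.replicate (2 ^ n) 0)).getD m none = none := by
        rw [ell_rep_getD hk]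
        by_cases hmlt : m < 2 ^ n * k
        · rw [if_pos hmlt, if_neg (by tauto)]
        · rw [if_neg hmlt]
          have : m - 2 ^ n * k = 0 := by omega
          rw [this]
          rfl
      constructor
      · rw [hrk]
        simp only [Nat.sub_self, List.range_zero, List.map_nil]
        show attF k _ m = _
        unfold attF
        rw [hgd]
      · rw [hlab]
        show labF _ m = _
        unfold labF
        rw [hgd]
  · show [0] = [(combTree n k).pos []]
    have h0 : ordL k 0 = [] := by unfold ordL; simp
    have := pos_ordL (n := n) hk (m := 0) (by positivity)
    rw [h0] at this
    rw [this]
end CombAux2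
section CombAux3

open List Function

variable {n k : ℕ}

lemma attF_nonecase {L : List (Option ℕ)} {x : ℕ} (h : L.getD x none = none) :
    attF k L x = [x] := by unfold attF; rw [h]

lemma attF_zerocase {L : List (Option ℕ)} {x : ℕ} (h : L.getD x none = some 0) :
    attF k L x = x :: (List.range k).map fun j => x + j + 1 := by unfold attF; rw [h]

lemma attF_succcase {L : List (Option ℕ)} {x c : ℕ} (h : L.getD x none = some (c + 1)) :
    attF k L x = [x, x + 1] := by unfold attF; rw [h]

lemma labF_nonecase {L : List (Option ℕ)} {x : ℕ} (h : L.getD x none = none) :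
    labF L x = Sum.inl false := by unfold labF; rw [h]

lemma labF_zerocase {L : List (Option ℕ)} {x : ℕ} (h : L.getD x none = some 0) :
    labF L x = Sum.inl true := by unfold labF; rw [h]

lemma labF_succcase {L : List (Option ℕ)} {x c : ℕ} (h : L.getD x none = some (c + 1)) :
    labF L x = Sum.inr c := by unfold labF; rw [h]

lemma labF_inr_inv {L : List (Option ℕ)} {x B : ℕ} (h : labF L x = Sum.inr B) :
    L.getD x none = some (B + 1) := by
  rcases hc : L.getD x none with _ | c
  · rw [labF_nonecase hc] at h; exact absurd h (by simp)
  · rcases c with _ | c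
    · rw [labF_zerocase hc] at h; exact absurd h (by simp)
    · rw [labF_succcase hc] at h
      rw [Sum.inr.injEq] at h
      rw [h]

def rhs0 (k : ℕ) : HGraph (Bool ⊕ ℕ) :=
  ⟨Finset.range (k + 1), Finset.range k,
    fun x => if x = 0 then 0 :: (List.range k).map (fun j => j + 1) else [x],
    fun x => if x = 0 then Sum.inl true else Sum.inl false, [0, k]⟩

def rhsS (i : ℕ) : HGraph (Bool ⊕ ℕ) :=
  ⟨Finset.range 3, Finset.range 2, fun x => [x, x + 1], fun _ => Sum.inr i, [0, 2]⟩

def Gr (n k : ℕ) : HRGrammar Bool :=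
  ⟨Finset.range (n + 1), fun _ => 2,
    fun A => if A = 0 then rhs0 k else rhsS (A - 1), CG k (ell k [n + 1])⟩

lemma ell_single : ell k [n + 1] = [some (n + 1), none] := by
  simp [ell, seg]

lemma GrS : (Gr n k).S = CG k [some (n + 1), none] := by
  show CG k (ell k [n + 1]) = _
  rw [ell_single]

lemma GrS_E : (Gr n k).S.E = Finset.range 2 := by rw [GrS]; rfl
lemma GrS_V : (Gr n k).S.V = Finset.range 2 := by rw [GrS]; rfl
lemma GrS_ext : (Gr n k).S.ext = [0] := by rw [GrS]; rfl

lemma GrS_att0 : (Gr n k).S.att 0 = [0, 1] := by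
  rw [GrS]
  show attF k [some (n + 1), none] 0 = [0, 1]
  rw [attF_succcase (L := [some (n + 1), none]) (x := 0) (c := n) rfl]

lemma GrS_att1 : (Gr n k).S.att 1 = [1] := by
  rw [GrS]
  show attF k [some (n + 1), none] 1 = [1]
  rw [attF_nonecase (L := [some (n + 1), none]) (x := 1) rfl]

lemma GrS_lab0 : (Gr n k).S.lab 0 = Sum.inr n := by
  rw [GrS]
  show labF [some (n + 1), none] 0 = Sum.inr n
  rw [labF_succcase (L := [some (n + 1), none]) (x := 0) (c := n) rfl]

lemma GrS_lab1 : (Gr n k).S.lab 1 = Sum.inl false := by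
  rw [GrS]
  show labF [some (n + 1), none] 1 = Sum.inl false
  rw [labF_nonecase (L := [some (n + 1), none]) (x := 1) rfl]

lemma Gr_rhs_zero : (Gr n k).rhs 0 = rhs0 k := by simp [Gr]
lemma Gr_rhs_succ (B : ℕ) : (Gr n k).rhs (B + 1) = rhsS B := by simp [Gr]

theorem Gr_WF (hn : 1 ≤ n) (hk : 1 ≤ k) :
    (Gr n k).WF (fun b => if b then k + 1 else 1) := by
  have hrk1 : (Gr n k).rk (fun b => if b then k + 1 else 1) (Sum.inl true) = k + 1 := rfl
  have hrk2 : (Gr n k).rk (fun b => if b then k + 1 else 1) (Sum.inl false) = 1 := rfl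
  have hrk3 : ∀ B, (Gr n k).rk (fun b => if b then k + 1 else 1) (Sum.inr B) = 2 := fun B => rfl
  refine ⟨?_, ?_, ?_, ?_, ?_, ?_⟩
  · intro a; cases a <;> simp
  · intro A _; show (1:ℕ) ≤ 2; omega
  · refine ⟨⟨0, by rw [GrS_V]; simp⟩, ?_, ?_, ?_⟩
    · intro e he
      rw [GrS_E] at he
      rw [Finset.mem_range] at he
      rcases (by omega : e = 0 ∨ e = 1) with rfl | rfl
      · rw [GrS_att0, GrS_lab0, hrk3, GrS_V]
        refine ⟨?_, by simp, by simp, by simp⟩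
        intro v hv; simp at hv; rcases hv with rfl | rfl <;> simp
      · rw [GrS_att1, GrS_lab1, hrk2, GrS_V]
        refine ⟨?_, by simp, by simp, by simp⟩
        intro v hv; simp at hv; subst hv; simp
    · rw [GrS_ext, GrS_V]
      intro v hv; simp at hv; subst hv; simp
    · rw [GrS_ext]; simp
  · intro A hA
    simp only [Gr, Finset.mem_range] at hA
    rcases A with _ | B
    · rw [Gr_rhs_zero]
      have hA0 : (rhs0 k).att 0 = 0 :: (List.range k).map (fun j => j + 1) := rfl
      have hAe : ∀ e : ℕ, e ≠ 0 → (rhs0 k).att e = [e] := fun e he => if_neg he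
      have hL0 : (rhs0 k).lab 0 = Sum.inl true := rfl
      have hLe : ∀ e : ℕ, e ≠ 0 → (rhs0 k).lab e = Sum.inl false := fun e he => if_neg he
      have hV : (rhs0 k).V = Finset.range (k + 1) := rfl
      have hE : (rhs0 k).E = Finset.range k := rfl
      have hext : (rhs0 k).ext = [0, k] := rfl
      refine ⟨⟨⟨0, by rw [hV]; simp⟩, ?_, ?_, ?_⟩, rfl⟩
      · intro e he
        rw [hE, Finset.mem_range] at he
        rcases Nat.eq_zero_or_pos e with rfl | he0
        · rw [hA0, hL0, hrk1, hV]
          refine ⟨?_, ?_, by simp, by simp⟩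
          · intro v hv
            simp at hv ⊢
            rcases hv with rfl | ⟨j, hj, rfl⟩ <;> omega
          · rw [List.nodup_cons]
            exact ⟨by simp, List.Nodup.map (fun a b h => by omega) (List.nodup_range (n := k))⟩
        · rw [hAe e (by omega), hLe e (by omega), hrk2, hV]
          refine ⟨?_, by simp, by simp, by simp⟩
          intro v hv
          simp at hv ⊢
          omega
      · rw [hext, hV]
        intro v hv
        simp at hv ⊢
        rcases hv with rfl | rfl <;> omega
      · rw [hext]
        simp
        omega
    · rw [Gr_rhs_succ]
      have hAe : ∀ e : ℕ, (rhsS B).att e = [e, e + 1] := fun e => rfl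
      have hLe : ∀ e : ℕ, (rhsS B).lab e = Sum.inr B := fun e => rfl
      have hV : (rhsS B).V = Finset.range 3 := rfl
      have hext2 : (rhsS B).ext = [0, 2] := rfl
      refine ⟨⟨⟨0, by rw [hV]; simp⟩, ?_, ?_, ?_⟩, rfl⟩
      · intro e he
        have he2 : e < 2 := by
          rw [show (rhsS B).E = Finset.range 2 from rfl, Finset.mem_range] at he
          exact he
        rw [hAe e, hLe e, hrk3, hV]
        refine ⟨?_, by simp, by simp, by simp⟩
        intro v hv
        simp at hv ⊢
        omega
      · rw [hext2, hV]
        intro v hv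
        simp at hv ⊢
        rcases hv with rfl | rfl <;> omega
      · rw [hext2]
        simp
  · intro e he B hB
    rw [GrS_E, Finset.mem_range] at he
    rcases (by omega : e = 0 ∨ e = 1) with rfl | rfl
    · rw [GrS_lab0] at hB
      rw [Sum.inr.injEq] at hB
      subst hB
      simp [Gr]
    · rw [GrS_lab1] at hB; exact absurd hB (by simp)
  · intro A hA e he B hB
    simp only [Gr, Finset.mem_range] at hA ⊢
    rcases A with _ | C
    · rw [Gr_rhs_zero] at he hB
      have h9 : (rhs0 k).lab e = if e = 0 then Sum.inl true else Sum.inl false := rfl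
      rw [h9] at hB
      split at hB <;> exact absurd hB (by simp)
    · rw [Gr_rhs_succ] at he hB
      have h9 : (rhsS C).lab e = Sum.inr C := rfl
      rw [h9, Sum.inr.injEq] at hB
      subst hB
      omega

lemma Gr_dep_lt {A B : ℕ} (h : (Gr n k).dep A B) : B < A := by
  obtain ⟨hA, hB, e, he, hlab⟩ := h
  rcases A with _ | C
  · rw [Gr_rhs_zero] at hlab
    have h9 : (rhs0 k).lab e = if e = 0 then Sum.inl true else Sum.inl false := rfl
    rw [h9] at hlab
    split at hlab <;> exact absurd hlab (by simp)
  · rw [Gr_rhs_succ] at hlab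
    have h9 : (rhsS C).lab e = Sum.inr C := rfl
    rw [h9, Sum.inr.injEq] at hlab
    omega

lemma Gr_chain (hn : 1 ≤ n) : ∀ d A, A + d ≤ n →
    Relation.ReflTransGen (Gr n k).dep (A + d) A := by
  intro d
  induction d with
  | zero => intro A _; exact Relation.ReflTransGen.refl
  | succ d ih =>
    intro A hA
    have h1 : Relation.ReflTransGen (Gr n k).dep (A + 1 + d) (A + 1) := ih (A + 1) (by omega)
    have h2 : (Gr n k).dep (A + 1) A := by
      refine ⟨by simp [Gr]; omega, by simp [Gr]; omega, 0, ?_, ?_⟩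
      · rw [Gr_rhs_succ]
        show (0 : ℕ) ∈ Finset.range 2
        simp
      · rw [Gr_rhs_succ]
        rfl
    have h3 : A + 1 + d = A + (d + 1) := by omega
    rw [h3] at h1
    exact h1.tail h2

theorem Gr_SL (hn : 1 ≤ n) : (Gr n k).SL := by
  constructor
  · intro A hA
    have key : ∀ X Y : ℕ, Relation.TransGen (Gr n k).dep X Y → Y < X := by
      intro X Y h
      induction h with
      | single h => exact Gr_dep_lt h
      | tail h₁ h₂ ih => have := Gr_dep_lt h₂; omega
    have := key A A hA
    omega
  · intro A hA
    refine ⟨n, ⟨0, ?_, GrS_lab0⟩, ?_⟩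
    · rw [GrS_E]; simp
    · simp only [Gr, Finset.mem_range] at hA
      have := Gr_chain (k := k) hn (n - A) A (by omega)
      rwa [show A + (n - A) = n by omega] at this

theorem Gr_size (hn : 1 ≤ n) (hk : 1 ≤ k) : (Gr n k).size ≤ 11 * (k ^ 2 + n) := by
  have hSsize : (Gr n k).S.size = 4 := by
    unfold HGraph.size HGraph.esize
    rw [GrS_V, GrS_E, Finset.card_range]
    rw [Finset.sum_range_succ, Finset.sum_range_succ, Finset.sum_range_zero]
    rw [GrS_att0, GrS_att1]
    simp
  have hrhsS : ∀ B, (rhsS B).size = 5 := by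
    intro B
    unfold HGraph.size HGraph.esize
    show Finset.card (Finset.range 3) + ∑ e ∈ Finset.range 2,
      (if ([e, e+1] : List ℕ).length ≤ 2 then 1 else ([e, e+1] : List ℕ).length) = 5
    simp
  have hrhs0 : (rhs0 k).size ≤ (k + 1) + k * (k + 1) := by
    unfold HGraph.size HGraph.esize
    show Finset.card (Finset.range (k + 1)) + _ ≤ _
    rw [Finset.card_range]
    have hb : ∀ e ∈ Finset.range k,
        (if ((rhs0 k).att e).length ≤ 2 then 1 else ((rhs0 k).att e).length) ≤ k + 1 := by
      intro e he
      have hA0 : (rhs0 k).att 0 = 0 :: (List.range k).map (fun j => j + 1) := rfl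
      have hAe : ∀ e : ℕ, e ≠ 0 → (rhs0 k).att e = [e] := fun e he => if_neg he
      split
      · omega
      · rcases Nat.eq_zero_or_pos e with rfl | he0
        · rw [hA0]
          simp
        · rw [hAe e (by omega)]
          simp
    calc (k + 1) + ∑ e ∈ Finset.range k, (if ((rhs0 k).att e).length ≤ 2 then 1
          else ((rhs0 k).att e).length)
        ≤ (k + 1) + ∑ _e ∈ Finset.range k, (k + 1) := by
          exact Nat.add_le_add_left (Finset.sum_le_sum hb) _
      _ = (k + 1) + k * (k + 1) := by rw [Finset.sum_const, Finset.card_range, smul_eq_mul]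
  unfold HRGrammar.size
  have hNT : (Gr n k).NT = Finset.range (n + 1) := rfl
  rw [hNT, hSsize]
  rw [Finset.sum_range_succ']
  have h1 : ∀ i, (Gr n k).rhs (i + 1) = rhsS i := Gr_rhs_succ
  have h2 : ∑ i ∈ Finset.range n, ((Gr n k).rhs (i + 1)).size = 5 * n := by
    rw [Finset.sum_congr rfl (fun i _ => by rw [h1 i, hrhsS i])]
    rw [Finset.sum_const, Finset.card_range, smul_eq_mul, mul_comm]
  rw [h2, show (Gr n k).rhs 0 = rhs0 k from Gr_rhs_zero]
  have h3 := hrhs0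
  nlinarith [sq_nonneg k, hk, hn]

end CombAux3
section CombAux4

open List Function

variable {n k : ℕ}

def wtF : ℕ → ℕ := fun x => if x = 0 then 1 else 2 ^ (x - 1)

def muF (w : List ℕ) : ℕ := (w.map fun x => 3 ^ x).sum

def InvW (n k : ℕ) (g : HGraph (Bool ⊕ ℕ)) (w : List ℕ) : Prop :=
  (∀ e ∈ g.E, ∀ v ∈ g.att e, v ∈ g.V) ∧ (∀ v ∈ g.ext, v ∈ g.V) ∧
    (∀ x ∈ w, x ≤ n + 1) ∧ (w.map wtF).sum = 2 ^ n ∧ g.Isomorphic (CG k (ell k w))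

lemma iso_self (g : HGraph (Bool ⊕ ℕ)) : g.Isomorphic g :=
  ⟨id, id, Set.bijOn_id _, Set.bijOn_id _, fun e _ => (List.map_id _).symm,
    fun e _ => rfl, (List.map_id _).symm⟩

lemma InvW_base (hn : 1 ≤ n) (hk : 0 < k) : InvW n k (Gr n k).S [n + 1] := by
  refine ⟨?_, ?_, ?_, ?_, ?_⟩
  · intro e he v hv
    rw [GrS_E, Finset.mem_range] at he
    rw [GrS_V]
    rcases (by omega : e = 0 ∨ e = 1) with rfl | rfl
    · rw [GrS_att0] at hv
      simp at hv ⊢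
      omega
    · rw [GrS_att1] at hv
      simp at hv ⊢
      omega
  · intro v hv
    rw [GrS_ext] at hv
    simp at hv
    subst hv
    rw [GrS_V]
    simp
  · intro x hx
    simp at hx
    omega
  · simp [wtF]
  · exact iso_self _

lemma blocky (hk : 0 < k) : ∀ (w : List ℕ) (x : ℕ),
    (w.flatMap (seg k)).getD x none = some 0 → x + k ≤ (w.flatMap (seg k)).length := by
  intro w
  induction w with
  | nil => intro x h; simp at h
  | cons a w ih =>
    intro x h
    rw [List.flatMap_cons] at h ⊢
    have hlen : (seg k a).length = if a = 0 then k else 1 := seg_len hk a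
    rcases Nat.lt_or_ge x (seg k a).length with hx | hx
    · rw [List.getD_append _ _ _ _ hx] at h
      by_cases ha : a = 0
      · subst ha
        rw [List.length_append]
        rcases Nat.eq_zero_or_pos x with rfl | hx0
        · rw [if_pos rfl] at hlen
          omega
        · exfalso
          have hseg : seg k 0 = some 0 :: List.replicate (k - 1) none := if_pos rfl
          rw [hseg] at h
          cases x with
          | zero => omega
          | succ x' =>
            rw [List.getD_cons_succ, getD_rep_none] at h
            exact absurd h (by simp)
      · have hseg : seg k a = [some a] := if_neg ha
        rw [hseg] at h hx
        simp at hx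
        subst hx
        simp at h
        exact absurd h ha
    · rw [List.getD_append_right _ _ _ _ hx] at h
      have := ih _ h
      rw [List.length_append]
      omega

lemma splitW (hk : 0 < k) : ∀ (w : List ℕ) (x B : ℕ),
    (ell k w).getD x none = some (B + 1) →
    ∃ u v, w = u ++ (B + 1) :: v ∧ (u.flatMap (seg k)).length = x := by
  intro w
  induction w with
  | nil =>
    intro x B h
    rw [show ell k [] = [none] by simp [ell]] at h
    cases x with
    | zero => simp at h
    | succ x' => simp at h
  | cons a w ih =>
    intro x B h
    have hellc : ell k (a :: w) = seg k a ++ ell k w := by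
      unfold ell
      rw [List.flatMap_cons, List.append_assoc]
    rw [hellc] at h
    rcases Nat.lt_or_ge x (seg k a).length with hx | hx
    · rw [List.getD_append _ _ _ _ hx] at h
      by_cases ha : a = 0
      · exfalso
        subst ha
        have hseg : seg k 0 = some 0 :: List.replicate (k - 1) none := if_pos rfl
        rw [hseg] at h
        cases x with
        | zero => simp at h
        | succ x' =>
          rw [List.getD_cons_succ, getD_rep_none] at h
          exact absurd h (by simp)
      · have hseg : seg k a = [some a] := if_neg ha
        rw [hseg] at h hx
        simp at hx
        subst hx
        simp at h
        subst h
        exact ⟨[], w, rfl, by simp⟩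
    · rw [List.getD_append_right _ _ _ _ hx] at h
      obtain ⟨u, v, rfl, hlen⟩ := ih _ _ h
      refine ⟨a :: u, v, rfl, ?_⟩
      rw [List.flatMap_cons, List.length_append]
      omega

lemma allzero_getD (hk : 0 < k) (w : List ℕ) (h0 : ∀ x ∈ w, x = 0) (y : ℕ) :
    (ell k w).getD y none = some 0 ∨ (ell k w).getD y none = none := by
  unfold ell
  rcases Nat.lt_or_ge y (w.flatMap (seg k) ++ [none]).length with hy | hy
  · have hmem : (w.flatMap (seg k) ++ [none]).getD y none ∈ w.flatMap (seg k) ++ [none] := by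
      rw [List.getD_eq_getElem _ _ hy]
      exact List.getElem_mem _
    rw [List.mem_append] at hmem
    rcases hmem with hmem | hmem
    · rw [List.mem_flatMap] at hmem
      obtain ⟨a, ha, hmem'⟩ := hmem
      have ha0 := h0 a ha
      subst ha0
      rw [show seg k 0 = some 0 :: List.replicate (k - 1) none from if_pos rfl,
        List.mem_cons] at hmem'
      rcases hmem' with h | h
      · exact Or.inl h
      · exact Or.inr (List.eq_of_mem_replicate h)
    · rw [List.mem_singleton] at hmem
      exact Or.inr hmem
  · right
    exact List.getD_eq_default _ _ hy

lemma ell_decomp (u v : List ℕ) (A : ℕ) :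
    ell k (u ++ (A + 1) :: v) =
      (u.flatMap (seg k)) ++ (some (A + 1) :: (v.flatMap (seg k) ++ [none])) := by
  unfold ell
  rw [List.flatMap_append, List.flatMap_cons,
    show seg k (A + 1) = [some (A + 1)] from if_neg (Nat.succ_ne_zero A)]
  simp

lemma ell_decomp0 (u v : List ℕ) :
    ell k (u ++ 0 :: v) =
      (u.flatMap (seg k)) ++ ((some 0 :: List.replicate (k - 1) none) ++ (v.flatMap (seg k) ++ [none])) := by
  unfold ell
  rw [List.flatMap_append, List.flatMap_cons,
    show seg k 0 = some 0 :: List.replicate (k - 1) none from if_pos rfl]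
  simp

lemma ell_decomp2 (u v : List ℕ) (B : ℕ) :
    ell k (u ++ (B + 1) :: (B + 1) :: v) =
      (u.flatMap (seg k)) ++ (([some (B + 1), some (B + 1)]) ++ (v.flatMap (seg k) ++ [none])) := by
  unfold ell
  rw [List.flatMap_append, List.flatMap_cons, List.flatMap_cons,
    show seg k (B + 1) = [some (B + 1)] from if_neg (Nat.succ_ne_zero B)]
  simp

lemma core (hk : 0 < k)
    {g g' h : HGraph (Bool ⊕ ℕ)} {e₀ p d a₀ : ℕ}
    {L L' P Q mid : List (Option ℕ)}
    (hP : P.length = p)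
    (hLdef : L = P ++ some (a₀ + 1) :: Q)
    (hL'def : L' = P ++ (mid ++ Q))
    (hQ : 1 ≤ Q.length)
    (hblocky : ∀ x, P.getD x none = some 0 → x + k ≤ p)
    (hd : 1 ≤ d) (hmidlen : mid.length = d)
    (hhV : h.V = Finset.range (d + 1)) (hhE : h.E = Finset.range d)
    (hhext : h.ext = [0, d])
    (hhattc : ∀ eh ∈ h.E, ∀ vv ∈ h.att eh, vv ∈ h.V)
    (hmatt : ∀ eh < d, attF k L' (p + eh) = (h.att eh).map (fun z => p + z))
    (hmlab : ∀ eh < d, labF L' (p + eh) = h.lab eh)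
    (hclosed : ∀ e ∈ g.E, ∀ vv ∈ g.att e, vv ∈ g.V)
    (hextc : ∀ vv ∈ g.ext, vv ∈ g.V)
    (f fe : ℕ → ℕ)
    (hfV : Set.BijOn f ↑g.V ↑(Finset.range L.length))
    (hfE : Set.BijOn fe ↑g.E ↑(Finset.range L.length))
    (hatt : ∀ e ∈ g.E, attF k L (fe e) = (g.att e).map f)
    (hlab : ∀ e ∈ g.E, labF L (fe e) = g.lab e)
    (hext : ([0] : List ℕ) = g.ext.map f)
    (he₀ : e₀ ∈ g.E) (hfe₀ : fe e₀ = p)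
    (hrep : IsReplacement g e₀ h g') :
    g'.Isomorphic (CG k L') ∧ (∀ e ∈ g'.E, ∀ vv ∈ g'.att e, vv ∈ g'.V) ∧
      (∀ vv ∈ g'.ext, vv ∈ g'.V) := by
  obtain ⟨ρ, η, hρinj, hηinj, hρfresh, hρext, hηfresh, hV', hE', hgatt, hhatt2, hext'⟩ := hrep
  -- closure facts for g'
  have hclosed' : ∀ e ∈ g'.E, ∀ vv ∈ g'.att e, vv ∈ g'.V := by
    intro e he vv hv
    rw [hE', Finset.mem_union] at he
    rw [hV', Finset.mem_union]
    rcases he with he | he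
    · left
      have h1 := (hgatt e he).1
      rw [h1] at hv
      exact hclosed e (Finset.mem_of_mem_erase he) vv hv
    · right
      rw [Finset.mem_image] at he
      obtain ⟨eh, heh, rfl⟩ := he
      have h1 := (hhatt2 eh heh).1
      rw [h1] at hv
      rw [List.mem_map] at hv
      obtain ⟨z, hz, rfl⟩ := hv
      exact Finset.mem_image_of_mem ρ (hhattc eh heh z hz)
  have hextc' : ∀ vv ∈ g'.ext, vv ∈ g'.V := by
    intro vv hv
    rw [hext'] at hv
    rw [hV', Finset.mem_union]
    exact Or.inl (hextc vv hv)
  -- lengths and getD facts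
  have hlenL : L.length = p + 1 + Q.length := by
    rw [hLdef, List.length_append, List.length_cons, hP]
    omega
  have hlenL' : L'.length = p + (d + Q.length) := by
    rw [hL'def, List.length_append, List.length_append, hP, hmidlen]
  have hLp : L.getD p none = some (a₀ + 1) := by
    rw [hLdef, List.getD_append_right _ _ _ _ (by omega : P.length ≤ p)]
    have h1 : p - P.length = 0 := by omega
    rw [h1]
    rfl
  have hgdlt : ∀ x < p, L'.getD x none = L.getD x none := by
    intro x hx
    rw [hLdef, hL'def, List.getD_append _ _ _ _ (by omega), List.getD_append _ _ _ _ (by omega)]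
  have hgdP : ∀ x < p, L.getD x none = P.getD x none := by
    intro x hx
    rw [hLdef, List.getD_append _ _ _ _ (by omega)]
  have hgdgt : ∀ x, p < x → L'.getD (x + (d - 1)) none = L.getD x none := by
    intro x hx1
    have h1 : L.getD x none = Q.getD (x - p - 1) none := by
      rw [hLdef, List.getD_append_right _ _ _ _ (by omega : P.length ≤ x)]
      have h2 : x - P.length = (x - p - 1) + 1 := by omega
      rw [h2, List.getD_cons_succ]
    have h2 : L'.getD (x + (d - 1)) none = Q.getD (x - p - 1) none := by
      rw [hL'def, ← List.append_assoc]
      rw [List.getD_append_right _ _ _ _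
        (by rw [List.length_append, hP, hmidlen]; omega : (P ++ mid).length ≤ x + (d - 1))]
      have h3 : x + (d - 1) - (P ++ mid).length = x - p - 1 := by
        rw [List.length_append, hP, hmidlen]
        omega
      rw [h3]
    rw [h1, h2]
  have hgdmid : ∀ j < d, L'.getD (p + j) none = mid.getD j none := by
    intro j hj
    rw [hL'def, List.getD_append_right _ _ _ _ (by omega : P.length ≤ p + j)]
    have h1 : p + j - P.length = j := by omega
    rw [h1, List.getD_append _ _ _ _ (by omega)]
  -- the attachment of e₀
  have hatt0 : attF k L p = [p, p + 1] := attF_succcase hLp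
  have hmap : (g.att e₀).map f = [p, p + 1] := by
    have h1 := hatt e₀ he₀
    rw [hfe₀, hatt0] at h1
    exact h1.symm
  obtain ⟨a, b, hab⟩ := List.length_eq_two.mp
    (by have := congrArg List.length hmap; simpa using this)
  rw [hab] at hmap
  simp at hmap
  obtain ⟨hfa, hfb⟩ := hmap
  have haV : a ∈ g.V := hclosed e₀ he₀ a (by rw [hab]; simp)
  have hbV : b ∈ g.V := hclosed e₀ he₀ b (by rw [hab]; simp)
  have hρ0 : ρ 0 = a ∧ ρ d = b := by
    have h1 := hρext
    rw [hhext, hab] at h1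
    simpa using h1
  -- the new iso
  set shf : ℕ → ℕ := fun x => if x ≤ p then x else x + (d - 1) with hshf
  set F : ℕ → ℕ := fun vv => if vv ∈ g.V then shf (f vv) else p + Function.invFunOn ρ ↑h.V vv
    with hFdef
  set FE : ℕ → ℕ := fun e => if e ∈ g.E then shf (fe e) else p + Function.invFunOn η ↑h.E e
    with hFEdef
  have hshle : ∀ x, x ≤ p → shf x = x := fun x hx => if_pos hx
  have hshgt : ∀ x, p < x → shf x = x + (d - 1) := fun x hx => if_neg (by omega)
  have hFg : ∀ vv ∈ g.V, F vv = shf (f vv) := fun vv hv => if_pos hv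
  have hFEg : ∀ e ∈ g.E, FE e = shf (fe e) := fun e he => if_pos he
  have hρval : ∀ uu ∈ h.V, F (ρ uu) = p + uu := by
    intro uu huu
    by_cases hin : ρ uu ∈ g.V
    · rw [hFg _ hin]
      have hext_mem : uu ∈ h.ext := by
        by_contra hc
        exact hρfresh uu huu hc hin
      rw [hhext] at hext_mem
      simp at hext_mem
      rcases hext_mem with rfl | rfl
      · rw [hρ0.1, hfa, hshle p le_rfl]
        omega
      · rw [hρ0.2, hfb, hshgt _ (by omega)]
        omega
    · simp only [hFdef]
      rw [if_neg hin]
      congr 1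
      exact hρinj.leftInvOn_invFunOn (Finset.mem_coe.mpr huu)
  have hηval : ∀ eh ∈ h.E, FE (η eh) = p + eh := by
    intro eh heh
    simp only [hFEdef]
    rw [if_neg (hηfresh eh heh)]
    congr 1
    exact hηinj.leftInvOn_invFunOn (Finset.mem_coe.mpr heh)
  have hflt : ∀ vv ∈ g.V, f vv < L.length := by
    intro vv hv
    have := hfV.mapsTo (Finset.mem_coe.mpr hv)
    rwa [Finset.mem_coe, Finset.mem_range] at this
  have hfelt : ∀ e ∈ g.E, fe e < L.length := by
    intro e he
    have := hfE.mapsTo (Finset.mem_coe.mpr he)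
    rwa [Finset.mem_coe, Finset.mem_range] at this
  -- shift transport of attF/labF
  have hASH : ∀ x, x < L.length → x ≠ p →
      attF k L' (shf x) = (attF k L x).map shf ∧ labF L' (shf x) = labF L x := by
    intro x hx hxp
    rcases Nat.lt_or_ge x p with hlt | hge
    · have hsx : shf x = x := hshle x (by omega)
      have hgd : L'.getD x none = L.getD x none := hgdlt x hlt
      rcases hc : L.getD x none with _ | c
      · rw [hsx, attF_nonecase hc, attF_nonecase (hgd.trans hc),
          labF_nonecase hc, labF_nonecase (hgd.trans hc)]
        refine ⟨?_, rfl⟩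
        simp [hshle x (le_of_lt hlt)]
      · rcases c with _ | c
        · have hPx : P.getD x none = some 0 := by rw [← hgdP x hlt, hc]
          have hbk : x + k ≤ p := hblocky x hPx
          rw [hsx, attF_zerocase hc, attF_zerocase (hgd.trans hc),
            labF_zerocase hc, labF_zerocase (hgd.trans hc)]
          refine ⟨?_, rfl⟩
          rw [List.map_cons]
          congr 1
          · exact (hshle x (by omega)).symm
          · rw [List.map_map]
            apply List.map_congr_left
            intro j hj
            rw [List.mem_range] at hj
            simp only [Function.comp_apply]
            rw [hshle _ (by omega)]
        · rw [hsx, attF_succcase hc, attF_succcase (hgd.trans hc),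
            labF_succcase hc, labF_succcase (hgd.trans hc)]
          refine ⟨?_, rfl⟩
          simp [hshle x (by omega), hshle (x + 1) (by omega)]
    · have hgt : p < x := by omega
      have hsx : shf x = x + (d - 1) := hshgt x hgt
      have hgd : L'.getD (x + (d - 1)) none = L.getD x none := hgdgt x hgt
      rcases hc : L.getD x none with _ | c
      · rw [hsx, attF_nonecase hc, attF_nonecase (hgd.trans hc),
          labF_nonecase hc, labF_nonecase (hgd.trans hc)]
        refine ⟨?_, rfl⟩
        simp only [List.map_cons, List.map_nil]
        rw [hshgt x hgt]
      · rcases c with _ | c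
        · rw [hsx, attF_zerocase (hgd.trans hc), attF_zerocase hc,
            labF_zerocase (hgd.trans hc), labF_zerocase hc]
          refine ⟨?_, rfl⟩
          rw [List.map_cons]
          congr 1
          · exact (hshgt x hgt).symm
          · rw [List.map_map]
            apply List.map_congr_left
            intro j hj
            simp only [Function.comp_apply]
            rw [hshgt _ (by omega)]
            omega
        · rw [hsx, attF_succcase (hgd.trans hc), attF_succcase hc,
            labF_succcase (hgd.trans hc), labF_succcase hc]
          refine ⟨?_, rfl⟩
          simp only [List.map_cons, List.map_nil]
          rw [hshgt x hgt, hshgt (x + 1) (by omega)]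
          have h9 : x + (d - 1) + 1 = x + 1 + (d - 1) := by omega
          rw [h9]
  -- Bijectivity of F
  have hFbij : Set.BijOn F ↑g'.V ↑(Finset.range L'.length) := by
    refine ⟨?_, ?_, ?_⟩
    · intro vv hv
      rw [Finset.mem_coe, hV', Finset.mem_union] at hv
      rw [Finset.mem_coe, Finset.mem_range]
      rcases hv with hv | hv
      · rw [hFg vv hv]
        have h1 := hflt vv hv
        rcases le_or_gt (f vv) p with h2 | h2
        · rw [hshle _ h2]; omega
        · rw [hshgt _ h2]; omega
      · rw [Finset.mem_image] at hv
        obtain ⟨uu, huu, rfl⟩ := hv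
        rw [hρval uu huu]
        rw [hhV, Finset.mem_range] at huu
        omega
    · intro v₁ hv₁ v₂ hv₂ heq
      rw [Finset.mem_coe, hV', Finset.mem_union] at hv₁ hv₂
      by_cases h1 : v₁ ∈ g.V <;> by_cases h2 : v₂ ∈ g.V
      · rw [hFg _ h1, hFg _ h2] at heq
        have e1 := hflt _ h1
        have e2 := hflt _ h2
        have heq2 : f v₁ = f v₂ := by
          rcases le_or_gt (f v₁) p with hx | hx <;> rcases le_or_gt (f v₂) p with hy | hy
          · rwa [hshle _ hx, hshle _ hy] at heq
          · rw [hshle _ hx, hshgt _ hy] at heq; omega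
          · rw [hshgt _ hx, hshle _ hy] at heq; omega
          · rw [hshgt _ hx, hshgt _ hy] at heq; omega
        exact hfV.injOn (Finset.mem_coe.mpr h1) (Finset.mem_coe.mpr h2) heq2
      · exfalso
        rcases hv₂ with hv₂ | hv₂
        · exact h2 hv₂
        rw [Finset.mem_image] at hv₂
        obtain ⟨uu, huu, rfl⟩ := hv₂
        rw [hρval uu huu, hFg _ h1] at heq
        have huu0 : uu ≠ 0 := by rintro rfl; rw [hρ0.1] at h2; exact h2 haV
        have huud : uu ≠ d := by rintro rfl; rw [hρ0.2] at h2; exact h2 hbV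
        rw [hhV, Finset.mem_range] at huu
        have e1 := hflt _ h1
        rcases le_or_gt (f v₁) p with hx | hx
        · rw [hshle _ hx] at heq; omega
        · rw [hshgt _ hx] at heq; omega
      · exfalso
        rcases hv₁ with hv₁ | hv₁
        · exact h1 hv₁
        rw [Finset.mem_image] at hv₁
        obtain ⟨uu, huu, rfl⟩ := hv₁
        rw [hρval uu huu, hFg _ h2] at heq
        have huu0 : uu ≠ 0 := by rintro rfl; rw [hρ0.1] at h1; exact h1 haV
        have huud : uu ≠ d := by rintro rfl; rw [hρ0.2] at h1; exact h1 hbV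
        rw [hhV, Finset.mem_range] at huu
        have e2 := hflt _ h2
        rcases le_or_gt (f v₂) p with hx | hx
        · rw [hshle _ hx] at heq; omega
        · rw [hshgt _ hx] at heq; omega
      · have hv₁' : ∃ uu ∈ h.V, ρ uu = v₁ := by
          rcases hv₁ with hv₁ | hv₁
          · exact absurd hv₁ h1
          · rwa [Finset.mem_image] at hv₁
        have hv₂' : ∃ uu ∈ h.V, ρ uu = v₂ := by
          rcases hv₂ with hv₂ | hv₂
          · exact absurd hv₂ h2
          · rwa [Finset.mem_image] at hv₂
        obtain ⟨u₁, hu₁, rfl⟩ := hv₁'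
        obtain ⟨u₂, hu₂, rfl⟩ := hv₂'
        rw [hρval _ hu₁, hρval _ hu₂] at heq
        have : u₁ = u₂ := by omega
        rw [this]
    · intro y hy
      rw [Finset.mem_coe, Finset.mem_range] at hy
      rcases le_or_gt y p with h1 | h1
      · have hyL : y ∈ Finset.range L.length := by rw [Finset.mem_range]; omega
        obtain ⟨vv, hvv, hfvv⟩ := hfV.surjOn (Finset.mem_coe.mpr hyL)
        refine ⟨vv, ?_, ?_⟩
        · rw [Finset.mem_coe, hV', Finset.mem_union]
          exact Or.inl (Finset.mem_coe.mp hvv)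
        · rw [hFg _ (Finset.mem_coe.mp hvv), hfvv, hshle _ h1]
      · rcases Nat.lt_or_ge y (p + d) with h2 | h2
        · refine ⟨ρ (y - p), ?_, ?_⟩
          · rw [Finset.mem_coe, hV', Finset.mem_union]
            right
            exact Finset.mem_image_of_mem ρ (by rw [hhV, Finset.mem_range]; omega)
          · rw [hρval _ (by rw [hhV, Finset.mem_range]; omega)]
            omega
        · have hyL : (y - (d - 1)) ∈ Finset.range L.length := by
            rw [Finset.mem_range]
            omega
          obtain ⟨vv, hvv, hfvv⟩ := hfV.surjOn (Finset.mem_coe.mpr hyL)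
          refine ⟨vv, ?_, ?_⟩
          · rw [Finset.mem_coe, hV', Finset.mem_union]
            exact Or.inl (Finset.mem_coe.mp hvv)
          · rw [hFg _ (Finset.mem_coe.mp hvv), hfvv, hshgt _ (by omega)]
            omega
  -- Bijectivity of FE
  have hfeer : ∀ e, e ∈ g.E.erase e₀ → fe e ≠ p := by
    intro e he hcon
    have heg : e ∈ g.E := Finset.mem_of_mem_erase he
    have hene : e ≠ e₀ := Finset.ne_of_mem_erase he
    exact hene (hfE.injOn (Finset.mem_coe.mpr heg) (Finset.mem_coe.mpr he₀)
      (by rw [hcon, hfe₀]))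
  have hFEbij : Set.BijOn FE ↑g'.E ↑(Finset.range L'.length) := by
    refine ⟨?_, ?_, ?_⟩
    · intro e he
      rw [Finset.mem_coe, hE', Finset.mem_union] at he
      rw [Finset.mem_coe, Finset.mem_range]
      rcases he with he | he
      · have heg : e ∈ g.E := Finset.mem_of_mem_erase he
        rw [hFEg _ heg]
        have h1 := hfelt e heg
        rcases le_or_gt (fe e) p with h2 | h2
        · rw [hshle _ h2]; omega
        · rw [hshgt _ h2]; omega
      · rw [Finset.mem_image] at he
        obtain ⟨eh, heh, rfl⟩ := he
        rw [hηval eh heh]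
        rw [hhE, Finset.mem_range] at heh
        omega
    · intro e₁ he₁ e₂ he₂ heq
      rw [Finset.mem_coe, hE', Finset.mem_union] at he₁ he₂
      rcases he₁ with he₁ | he₁ <;> rcases he₂ with he₂ | he₂
      · have hg1 : e₁ ∈ g.E := Finset.mem_of_mem_erase he₁
        have hg2 : e₂ ∈ g.E := Finset.mem_of_mem_erase he₂
        rw [hFEg _ hg1, hFEg _ hg2] at heq
        have e1 := hfelt _ hg1
        have e2 := hfelt _ hg2
        have heq2 : fe e₁ = fe e₂ := by
          rcases le_or_gt (fe e₁) p with hx | hx <;> rcases le_or_gt (fe e₂) p with hy | hy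
          · rwa [hshle _ hx, hshle _ hy] at heq
          · rw [hshle _ hx, hshgt _ hy] at heq; omega
          · rw [hshgt _ hx, hshle _ hy] at heq; omega
          · rw [hshgt _ hx, hshgt _ hy] at heq; omega
        exact hfE.injOn (Finset.mem_coe.mpr hg1) (Finset.mem_coe.mpr hg2) heq2
      · exfalso
        rw [Finset.mem_image] at he₂
        obtain ⟨eh, heh, rfl⟩ := he₂
        rw [hηval eh heh] at heq
        have hg1 : e₁ ∈ g.E := Finset.mem_of_mem_erase he₁
        rw [hFEg _ hg1] at heq
        have hne := hfeer e₁ he₁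
        have e1 := hfelt _ hg1
        rw [hhE, Finset.mem_range] at heh
        rcases le_or_gt (fe e₁) p with hx | hx
        · rw [hshle _ hx] at heq; omega
        · rw [hshgt _ hx] at heq; omega
      · exfalso
        rw [Finset.mem_image] at he₁
        obtain ⟨eh, heh, rfl⟩ := he₁
        rw [hηval eh heh] at heq
        have hg2 : e₂ ∈ g.E := Finset.mem_of_mem_erase he₂
        rw [hFEg _ hg2] at heq
        have hne := hfeer e₂ he₂
        have e2 := hfelt _ hg2
        rw [hhE, Finset.mem_range] at heh
        rcases le_or_gt (fe e₂) p with hx | hx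
        · rw [hshle _ hx] at heq; omega
        · rw [hshgt _ hx] at heq; omega
      · rw [Finset.mem_image] at he₁ he₂
        obtain ⟨f₁, hf₁, rfl⟩ := he₁
        obtain ⟨f₂, hf₂, rfl⟩ := he₂
        rw [hηval _ hf₁, hηval _ hf₂] at heq
        have : f₁ = f₂ := by omega
        rw [this]
    · intro y hy
      rw [Finset.mem_coe, Finset.mem_range] at hy
      rcases Nat.lt_or_ge y p with h1 | h1
      · have hyL : y ∈ Finset.range L.length := by rw [Finset.mem_range]; omega
        obtain ⟨e, he, hfee⟩ := hfE.surjOn (Finset.mem_coe.mpr hyL)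
        have heg : e ∈ g.E := Finset.mem_coe.mp he
        have hene : e ≠ e₀ := by
          intro hcon
          rw [hcon, hfe₀] at hfee
          omega
        refine ⟨e, ?_, ?_⟩
        · rw [Finset.mem_coe, hE', Finset.mem_union]
          exact Or.inl (Finset.mem_erase.mpr ⟨hene, heg⟩)
        · rw [hFEg _ heg, hfee, hshle _ (by omega)]
      · rcases Nat.lt_or_ge y (p + d) with h2 | h2
        · refine ⟨η (y - p), ?_, ?_⟩
          · rw [Finset.mem_coe, hE', Finset.mem_union]
            right
            exact Finset.mem_image_of_mem η (by rw [hhE, Finset.mem_range]; omega)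
          · rw [hηval _ (by rw [hhE, Finset.mem_range]; omega)]
            omega
        · have hyL : (y - (d - 1)) ∈ Finset.range L.length := by
            rw [Finset.mem_range]
            omega
          obtain ⟨e, he, hfee⟩ := hfE.surjOn (Finset.mem_coe.mpr hyL)
          have heg : e ∈ g.E := Finset.mem_coe.mp he
          have hene : e ≠ e₀ := by
            intro hcon
            rw [hcon, hfe₀] at hfee
            omega
          refine ⟨e, ?_, ?_⟩
          · rw [Finset.mem_coe, hE', Finset.mem_union]
            exact Or.inl (Finset.mem_erase.mpr ⟨hene, heg⟩)
          · rw [hFEg _ heg, hfee, hshgt _ (by omega)]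
            omega
  -- attachments
  have hattcond : ∀ e ∈ g'.E, attF k L' (FE e) = (g'.att e).map F := by
    intro e he
    rw [hE', Finset.mem_union] at he
    rcases he with he | he
    · have heg : e ∈ g.E := Finset.mem_of_mem_erase he
      rw [hFEg _ heg, (hgatt e he).1]
      rw [(hASH (fe e) (hfelt e heg) (hfeer e he)).1]
      rw [hatt e heg, List.map_map]
      apply List.map_congr_left
      intro vv hvv
      simp only [Function.comp_apply]
      exact (hFg vv (hclosed e heg vv hvv)).symm
    · rw [Finset.mem_image] at he
      obtain ⟨eh, heh, rfl⟩ := he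
      rw [hηval eh heh, (hhatt2 eh heh).1]
      have hehd : eh < d := by
        have := heh
        rwa [hhE, Finset.mem_range] at this
      rw [hmatt eh hehd, List.map_map]
      apply List.map_congr_left
      intro z hz
      simp only [Function.comp_apply]
      exact (hρval z (hhattc eh heh z hz)).symm
  -- labels
  have hlabcond : ∀ e ∈ g'.E, labF L' (FE e) = g'.lab e := by
    intro e he
    rw [hE', Finset.mem_union] at he
    rcases he with he | he
    · have heg : e ∈ g.E := Finset.mem_of_mem_erase he
      rw [hFEg _ heg, (hgatt e he).2]
      rw [(hASH (fe e) (hfelt e heg) (hfeer e he)).2]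
      exact hlab e heg
    · rw [Finset.mem_image] at he
      obtain ⟨eh, heh, rfl⟩ := he
      rw [hηval eh heh, (hhatt2 eh heh).2]
      have hehd : eh < d := by
        have := heh
        rwa [hhE, Finset.mem_range] at this
      exact hmlab eh hehd
  -- external nodes
  have hextcond : ([0] : List ℕ) = g'.ext.map F := by
    rw [hext']
    obtain ⟨v₀, hv₀, hfv₀⟩ : ∃ v₀, g.ext = [v₀] ∧ f v₀ = 0 := by
      rcases hx : g.ext with _ | ⟨v₀, rest⟩
      · rw [hx] at hext; simp at hext
      · rw [hx] at hext
        rcases rest with _ | ⟨v₁, r⟩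
        · simp at hext
          exact ⟨v₀, rfl, hext.symm⟩
        · exfalso
          have := congrArg List.length hext
          simp at this
    have hv₀V : v₀ ∈ g.V := hextc v₀ (by rw [hv₀]; simp)
    have hFv : F v₀ = 0 := by
      rw [hFg _ hv₀V, hfv₀, hshle 0 (Nat.zero_le p)]
    rw [hv₀, List.map_cons, List.map_nil, hFv]
  exact ⟨⟨F, FE, hFbij, hFEbij, hattcond, hlabcond, hextcond⟩, hclosed', hextc'⟩

end CombAux4
section CombAux5

open List Function

variable {n k : ℕ}

lemma rhs0_attc (hk : 0 < k) : ∀ eh ∈ (rhs0 k).E, ∀ vv ∈ (rhs0 k).att eh, vv ∈ (rhs0 k).V := by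
  intro eh heh vv hv
  rw [show (rhs0 k).E = Finset.range k from rfl, Finset.mem_range] at heh
  show vv ∈ Finset.range (k + 1)
  rcases Nat.eq_zero_or_pos eh with rfl | he0
  · rw [show (rhs0 k).att 0 = 0 :: (List.range k).map (fun j => j + 1) from rfl] at hv
    simp at hv ⊢
    rcases hv with rfl | ⟨j, hj, rfl⟩ <;> omega
  · rw [show (rhs0 k).att eh = [eh] from if_neg (by omega)] at hv
    simp at hv ⊢
    omega

lemma rhsS_attc (B : ℕ) : ∀ eh ∈ (rhsS B).E, ∀ vv ∈ (rhsS B).att eh, vv ∈ (rhsS B).V := by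
  intro eh heh vv hv
  rw [show (rhsS B).E = Finset.range 2 from rfl, Finset.mem_range] at heh
  rw [show (rhsS B).att eh = [eh, eh + 1] from rfl] at hv
  show vv ∈ Finset.range 3
  simp at hv ⊢
  omega

lemma step (hn : 1 ≤ n) (hk : 0 < k) {g g' : HGraph (Bool ⊕ ℕ)} {w : List ℕ}
    (hI : InvW n k g w) (hD : (Gr n k).Derive g g') :
    ∃ w', InvW n k g' w' ∧ muF w' < muF w := by
  obtain ⟨hclosed, hextc, hbound, hsum, f, fe, hfV, hfE, hatt, hlab, hext⟩ := hI
  obtain ⟨e₀, he₀, A, hANT, hlabe, hrep⟩ := hD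
  have hlabF : labF (ell k w) (fe e₀) = Sum.inr A := by
    have h1 := hlab e₀ he₀
    rw [hlabe] at h1
    exact h1
  have hgd := labF_inr_inv hlabF
  obtain ⟨u, v, rfl, hulen⟩ := splitW hk w (fe e₀) A hgd
  have hA_le : A ≤ n := by
    have : A ∈ Finset.range (n + 1) := hANT
    rw [Finset.mem_range] at this
    omega
  have hLdef := ell_decomp (k := k) u v A
  rcases A with _ | B
  · -- A = 0 : expand to a terminal block
    rw [Gr_rhs_zero] at hrep
    have hL'def := ell_decomp0 (k := k) u v
    have hmid : ∀ eh < k, (ell k (u ++ 0 :: v)).getD (fe e₀ + eh) none =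
        (some 0 :: List.replicate (k - 1) none).getD eh none := by
      intro eh hehd
      rw [hL'def, List.getD_append_right _ _ _ _ (by omega : (u.flatMap (seg k)).length ≤ fe e₀ + eh)]
      have hidx : fe e₀ + eh - (u.flatMap (seg k)).length = eh := by omega
      rw [hidx, List.getD_append _ _ _ _ (by simp; omega)]
    have hmattX : ∀ eh < k, attF k (ell k (u ++ 0 :: v)) (fe e₀ + eh) =
        ((rhs0 k).att eh).map (fun z => fe e₀ + z) := by
      intro eh hehd
      rcases Nat.eq_zero_or_pos eh with rfl | he0
      · have hmid0 : (ell k (u ++ 0 :: v)).getD (fe e₀ + 0) none = some 0 := by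
          rw [hmid 0 (by omega)]
          rfl
        rw [attF_zerocase hmid0,
          show (rhs0 k).att 0 = 0 :: (List.range k).map (fun j => j + 1) from rfl,
          List.map_cons, List.map_map]
        congr 1
      · have hmid2 : (ell k (u ++ 0 :: v)).getD (fe e₀ + eh) none = none := by
          rw [hmid eh hehd]
          cases eh with
          | zero => omega
          | succ e' => rw [List.getD_cons_succ, getD_rep_none]
        rw [attF_nonecase hmid2, show (rhs0 k).att eh = [eh] from if_neg (by omega)]
        simp
    have hmlabX : ∀ eh < k, labF (ell k (u ++ 0 :: v)) (fe e₀ + eh) = (rhs0 k).lab eh := by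
      intro eh hehd
      rcases Nat.eq_zero_or_pos eh with rfl | he0
      · have hmid0 : (ell k (u ++ 0 :: v)).getD (fe e₀ + 0) none = some 0 := by
          rw [hmid 0 (by omega)]
          rfl
        rw [labF_zerocase hmid0]
        rfl
      · have hmid2 : (ell k (u ++ 0 :: v)).getD (fe e₀ + eh) none = none := by
          rw [hmid eh hehd]
          cases eh with
          | zero => omega
          | succ e' => rw [List.getD_cons_succ, getD_rep_none]
        rw [labF_nonecase hmid2]
        exact (show (rhs0 k).lab eh = Sum.inl false from if_neg (by omega)).symm
    have hcore := core hk (g := g) (g' := g') (h := rhs0 k) (e₀ := e₀) (p := fe e₀) (d := k)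
      (a₀ := 0) (L := ell k (u ++ (0 + 1) :: v)) (L' := ell k (u ++ 0 :: v))
      (P := u.flatMap (seg k)) (Q := v.flatMap (seg k) ++ [none])
      (mid := some 0 :: List.replicate (k - 1) none)
      hulen hLdef hL'def (by simp)
      (fun x hx => by have := blocky hk u x hx; omega)
      hk (by simp; omega) rfl rfl rfl (rhs0_attc hk)
      hmattX hmlabX hclosed hextc f fe hfV hfE hatt hlab hext he₀ rfl hrep
    refine ⟨u ++ 0 :: v, ⟨hcore.2.1, hcore.2.2, ?_, ?_, hcore.1⟩, ?_⟩
    · intro x hx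
      simp only [List.mem_append, List.mem_cons] at hx
      rcases hx with hx | hx | hx
      · exact hbound x (by simp [hx])
      · omega
      · exact hbound x (by simp [hx])
    · rw [List.map_append, List.sum_append, List.map_cons, List.sum_cons] at hsum ⊢
      have h1 : wtF (0 + 1) = wtF 0 := by simp [wtF]
      rw [← h1]
      exact hsum
    · unfold muF
      rw [List.map_append, List.map_append, List.sum_append, List.sum_append,
        List.map_cons, List.map_cons, List.sum_cons, List.sum_cons]
      have h1 : (3 : ℕ) ^ 0 < 3 ^ (0 + 1) := by norm_num
      omega
  · -- A = B + 1 : expand to two chained nonterminals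
    rw [Gr_rhs_succ] at hrep
    have hL'def := ell_decomp2 (k := k) u v B
    have hmid2 : ∀ eh < 2, (ell k (u ++ (B + 1) :: (B + 1) :: v)).getD (fe e₀ + eh) none =
        some (B + 1) := by
      intro eh hehd
      rw [hL'def, List.getD_append_right _ _ _ _ (by omega : (u.flatMap (seg k)).length ≤ fe e₀ + eh)]
      have hidx : fe e₀ + eh - (u.flatMap (seg k)).length = eh := by omega
      rw [hidx, List.getD_append _ _ _ _ (by simp; omega)]
      rcases (by omega : eh = 0 ∨ eh = 1) with rfl | rfl <;> rfl
    have hmattX : ∀ eh < 2, attF k (ell k (u ++ (B + 1) :: (B + 1) :: v)) (fe e₀ + eh) =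
        ((rhsS B).att eh).map (fun z => fe e₀ + z) := by
      intro eh hehd
      rw [attF_succcase (hmid2 eh hehd), show (rhsS B).att eh = [eh, eh + 1] from rfl]
      simp only [List.map_cons, List.map_nil]
      have h9 : fe e₀ + eh + 1 = fe e₀ + (eh + 1) := by omega
      rw [h9]
    have hmlabX : ∀ eh < 2, labF (ell k (u ++ (B + 1) :: (B + 1) :: v)) (fe e₀ + eh) =
        (rhsS B).lab eh := by
      intro eh hehd
      rw [labF_succcase (hmid2 eh hehd)]
      rfl
    have hcore := core hk (g := g) (g' := g') (h := rhsS B) (e₀ := e₀) (p := fe e₀) (d := 2)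
      (a₀ := B + 1) (L := ell k (u ++ (B + 1 + 1) :: v))
      (L' := ell k (u ++ (B + 1) :: (B + 1) :: v))
      (P := u.flatMap (seg k)) (Q := v.flatMap (seg k) ++ [none])
      (mid := [some (B + 1), some (B + 1)])
      hulen hLdef hL'def (by simp)
      (fun x hx => by have := blocky hk u x hx; omega)
      (by omega) rfl rfl rfl rfl (rhsS_attc B)
      hmattX hmlabX hclosed hextc f fe hfV hfE hatt hlab hext he₀ rfl hrep
    refine ⟨u ++ (B + 1) :: (B + 1) :: v, ⟨hcore.2.1, hcore.2.2, ?_, ?_, hcore.1⟩, ?_⟩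
    · intro x hx
      simp only [List.mem_append, List.mem_cons] at hx
      rcases hx with hx | hx | hx | hx
      · exact hbound x (by simp [hx])
      · omega
      · omega
      · exact hbound x (by simp [hx])
    · rw [List.map_append, List.sum_append, List.map_cons, List.sum_cons] at hsum
      rw [List.map_append, List.sum_append, List.map_cons, List.map_cons, List.sum_cons,
        List.sum_cons]
      have h1 : wtF (B + 1 + 1) = 2 ^ (B + 1) := by simp [wtF]
      have h2 : wtF (B + 1) = 2 ^ B := by simp [wtF]
      rw [h1] at hsum
      rw [h2]
      have h3 : (2 : ℕ) ^ (B + 1) = 2 ^ B * 2 := pow_succ 2 B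
      omega
    · unfold muF
      rw [List.map_append, List.map_append, List.sum_append, List.sum_append,
        List.map_cons, List.map_cons, List.map_cons, List.sum_cons, List.sum_cons,
        List.sum_cons]
      have h3 : (3 : ℕ) ^ (B + 1 + 1) = 3 ^ (B + 1) * 3 := pow_succ 3 (B + 1)
      have h4 : 1 ≤ (3 : ℕ) ^ (B + 1) := Nat.one_le_pow _ _ (by norm_num)
      omega

lemma ell_getD_at (u v : List ℕ) (A : ℕ) :
    (ell k (u ++ (A + 1) :: v)).getD (u.flatMap (seg k)).length none = some (A + 1) ∧
      (u.flatMap (seg k)).length < (ell k (u ++ (A + 1) :: v)).length := by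
  constructor
  · rw [ell_decomp, List.getD_append_right _ _ _ _ le_rfl]
    rw [Nat.sub_self]
    rfl
  · rw [ell_decomp, List.length_append]
    simp

lemma progress (hk : 0 < k) {g : HGraph (Bool ⊕ ℕ)} {w : List ℕ}
    (hI : InvW n k g w) {x : ℕ} (hx : x ∈ w) (hx0 : x ≠ 0) :
    ∃ g', (Gr n k).Derive g g' := by
  obtain ⟨hclosed, hextc, hbound, hsum, f, fe, hfV, hfE, hatt, hlab, hext⟩ := hI
  rcases x with _ | B
  · exact absurd rfl hx0
  obtain ⟨u, v, rfl⟩ := List.append_of_mem hx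
  have hgd := (ell_getD_at (k := k) u v B).1
  have hplen := (ell_getD_at (k := k) u v B).2
  have hpE : (u.flatMap (seg k)).length ∈ (CG k (ell k (u ++ (B + 1) :: v))).E := by
    show _ ∈ Finset.range _
    rw [Finset.mem_range]
    exact hplen
  obtain ⟨e₀, he₀', hfee₀⟩ := hfE.surjOn (Finset.mem_coe.mpr hpE)
  have he₀ : e₀ ∈ g.E := Finset.mem_coe.mp he₀'
  have hlabe : g.lab e₀ = Sum.inr B := by
    rw [← hlab e₀ he₀, hfee₀]
    exact labF_succcase hgd
  have hBNT : B ∈ (Gr n k).NT := by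
    show B ∈ Finset.range (n + 1)
    rw [Finset.mem_range]
    have := hbound (B + 1) hx
    omega
  -- attachment pair of e₀
  have hatt0 : attF k (ell k (u ++ (B + 1) :: v)) (u.flatMap (seg k)).length =
      [(u.flatMap (seg k)).length, (u.flatMap (seg k)).length + 1] := attF_succcase hgd
  have hmap : (g.att e₀).map f =
      [(u.flatMap (seg k)).length, (u.flatMap (seg k)).length + 1] := by
    have h1 : attF k (ell k (u ++ (B + 1) :: v)) (fe e₀) = (g.att e₀).map f := hatt e₀ he₀
    rw [hfee₀, hatt0] at h1
    exact h1.symm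
  obtain ⟨a, b, hab⟩ := List.length_eq_two.mp
    (by have := congrArg List.length hmap; simpa using this)
  rw [hab] at hmap
  simp at hmap
  obtain ⟨hfa, hfb⟩ := hmap
  have haV : a ∈ g.V := hclosed e₀ he₀ a (by rw [hab]; simp)
  have hbV : b ∈ g.V := hclosed e₀ he₀ b (by rw [hab]; simp)
  have hane : a ≠ b := by
    intro hcon
    rw [hcon, hfb] at hfa
    omega
  set K := (g.V.sup id) + 1 with hK
  set K2 := (g.E.sup id) + 1 with hK2
  have hKfresh : ∀ z, K + z ∉ g.V := by
    intro z hz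
    have h1 := Finset.le_sup (f := id) hz
    rw [id_eq] at h1
    omega
  have hK2fresh : ∀ z, K2 + z ∉ g.E := by
    intro z hz
    have h1 := Finset.le_sup (f := id) hz
    rw [id_eq] at h1
    omega
  obtain ⟨X, hX1, hhV, hhE, hhext⟩ :
      ∃ X, 1 ≤ X ∧ ((Gr n k).rhs B).V = Finset.range (X + 1) ∧
        ((Gr n k).rhs B).E = Finset.range X ∧ ((Gr n k).rhs B).ext = [0, X] := by
    rcases B with _ | C
    · refine ⟨k, hk, ?_, ?_, ?_⟩ <;> rw [Gr_rhs_zero] <;> rfl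
    · refine ⟨2, by omega, ?_, ?_, ?_⟩ <;> rw [Gr_rhs_succ] <;> rfl
  set ρ : ℕ → ℕ := fun uu => if uu = 0 then a else if uu = X then b else K + uu with hρdef
  set η : ℕ → ℕ := fun eh => K2 + eh with hηdef
  set hB := (Gr n k).rhs B with hhBdef
  refine ⟨⟨g.V ∪ hB.V.image ρ, (g.E.erase e₀) ∪ hB.E.image η,
      fun y => if y ∈ hB.E.image η then (hB.att (y - K2)).map ρ else g.att y,
      fun y => if y ∈ hB.E.image η then hB.lab (y - K2) else g.lab y,
      g.ext⟩, e₀, he₀, B, hBNT, hlabe, ρ, η, ?_, ?_, ?_, ?_, ?_, rfl, rfl, ?_, ?_, rfl⟩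
  · -- InjOn ρ
    intro u₁ hu₁ u₂ hu₂ heq
    simp only [hρdef] at heq
    by_cases e1 : u₁ = 0 <;> by_cases e2 : u₂ = 0
    · rw [e1, e2]
    · exfalso
      rw [if_pos e1, if_neg e2] at heq
      by_cases e3 : u₂ = X
      · rw [if_pos e3] at heq; exact hane heq
      · rw [if_neg e3] at heq
        exact hKfresh u₂ (by rw [← heq]; exact haV)
    · exfalso
      rw [if_neg e1, if_pos e2] at heq
      by_cases e3 : u₁ = X
      · rw [if_pos e3] at heq; exact hane heq.symm
      · rw [if_neg e3] at heq
        exact hKfresh u₁ (by rw [heq]; exact haV)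
    · rw [if_neg e1, if_neg e2] at heq
      by_cases e3 : u₁ = X <;> by_cases e4 : u₂ = X
      · rw [e3, e4]
      · exfalso
        rw [if_pos e3, if_neg e4] at heq
        exact hKfresh u₂ (by rw [← heq]; exact hbV)
      · exfalso
        rw [if_neg e3, if_pos e4] at heq
        exact hKfresh u₁ (by rw [heq]; exact hbV)
      · rw [if_neg e3, if_neg e4] at heq
        omega
  · -- InjOn η
    intro e₁ _ e₂ _ heq
    simp only [hηdef] at heq
    omega
  · -- internal nodes fresh
    intro vv hvv hne
    rw [hhext] at hne
    simp at hne
    simp only [hρdef]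
    rw [if_neg hne.1, if_neg hne.2]
    exact hKfresh vv
  · -- ext mapping
    have h1 : ρ 0 = a := by simp only [hρdef]; simp
    have h2 : ρ X = b := by
      simp only [hρdef]
      rw [if_neg (by omega : ¬ X = 0)]
      simp
    rw [hhext, hab]
    simp only [List.map_cons, List.map_nil]
    rw [h1, h2]
  · -- new edges fresh
    intro eh _
    simp only [hηdef]
    exact hK2fresh eh
  · -- old edges unchanged
    intro e he
    have hnotim : e ∉ hB.E.image η := by
      intro hcon
      rw [Finset.mem_image] at hcon
      obtain ⟨eh, heh, hcon'⟩ := hcon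
      simp only [hηdef] at hcon'
      exact hK2fresh eh (hcon' ▸ Finset.mem_of_mem_erase he)
    exact ⟨if_neg hnotim, if_neg hnotim⟩
  · -- new edges get their attachments
    intro eh heh
    have him : η eh ∈ hB.E.image η := Finset.mem_image_of_mem η heh
    have hidx : η eh - K2 = eh := by simp only [hηdef]; omega
    constructor
    · show (if η eh ∈ hB.E.image η then (hB.att (η eh - K2)).map ρ else g.att (η eh)) =
        (hB.att eh).map ρ
      rw [if_pos him, hidx]
    · show (if η eh ∈ hB.E.image η then hB.lab (η eh - K2) else g.lab (η eh)) = hB.lab eh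
      rw [if_pos him, hidx]

lemma reach (hn : 1 ≤ n) (hk : 0 < k) : ∀ (m : ℕ) (w : List ℕ) (g : HGraph (Bool ⊕ ℕ)),
    muF w ≤ m → InvW n k g w →
    ∃ gT wT, Relation.ReflTransGen (Gr n k).Derive g gT ∧ InvW n k gT wT ∧ ∀ x ∈ wT, x = 0 := by
  intro m
  induction m with
  | zero =>
    intro w g hmu hI
    refine ⟨g, w, Relation.ReflTransGen.refl, hI, ?_⟩
    intro x hx
    exfalso
    have h1 : 3 ^ x ≤ muF w :=
      List.single_le_sum (fun _ _ => Nat.zero_le _) _ (List.mem_map_of_mem hx)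
    have h2 : 0 < 3 ^ x := by positivity
    omega
  | succ m ih =>
    intro w g hmu hI
    by_cases h0 : ∀ x ∈ w, x = 0
    · exact ⟨g, w, Relation.ReflTransGen.refl, hI, h0⟩
    · push_neg at h0
      obtain ⟨x, hx, hx0⟩ := h0
      obtain ⟨g', hD⟩ := progress hk hI hx hx0
      obtain ⟨w', hI', hmu'⟩ := step hn hk hI hD
      obtain ⟨gT, wT, hRT, hIT, h0T⟩ := ih w' g' (by omega) hI'
      exact ⟨gT, wT, Relation.ReflTransGen.head hD hRT, hIT, h0T⟩

lemma allzero_rep {w : List ℕ} (h0 : ∀ x ∈ w, x = 0) (hsum : (w.map wtF).sum = 2 ^ n) :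
    w = List.replicate (2 ^ n) 0 := by
  have hone : w.map wtF = List.replicate w.length 1 := by
    rw [List.eq_replicate_iff]
    refine ⟨by simp, ?_⟩
    intro b hb
    rw [List.mem_map] at hb
    obtain ⟨x, hx, rfl⟩ := hb
    rw [h0 x hx]
    rfl
  have hlen : (w.map wtF).sum = w.length := by
    rw [hone, List.sum_replicate, smul_eq_mul, mul_one]
  rw [hlen] at hsum
  rw [List.eq_replicate_iff]
  exact ⟨hsum, h0⟩

lemma terminal_of_allzero (hk : 0 < k) {g : HGraph (Bool ⊕ ℕ)} {w : List ℕ}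
    (hI : InvW n k g w) (h0 : ∀ x ∈ w, x = 0) :
    HRGrammar.Terminal g ∧ g.Isomorphic (gComb n k) := by
  obtain ⟨hclosed, hextc, hbound, hsum, hiso⟩ := hI
  have hrep := allzero_rep h0 hsum
  rw [hrep] at hiso
  refine ⟨?_, hiso⟩
  obtain ⟨f, fe, hfV, hfE, hatt, hlab, hext⟩ := hiso
  intro e he
  have hl := hlab e he
  rcases allzero_getD hk (List.replicate (2 ^ n) 0)
      (fun x hx => List.eq_of_mem_replicate hx) (fe e) with hgd | hgd
  · refine ⟨true, ?_⟩
    rw [← hl]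
    exact labF_zerocase hgd
  · refine ⟨false, ?_⟩
    rw [← hl]
    exact labF_nonecase hgd

lemma allzero_of_terminal {g : HGraph (Bool ⊕ ℕ)} {w : List ℕ}
    (hI : InvW n k g w) (hT : HRGrammar.Terminal g) : ∀ x ∈ w, x = 0 := by
  obtain ⟨hclosed, hextc, hbound, hsum, f, fe, hfV, hfE, hatt, hlab, hext⟩ := hI
  intro x hx
  by_contra hx0
  rcases x with _ | B
  · exact hx0 rfl
  obtain ⟨u, v, rfl⟩ := List.append_of_mem hx
  have hgd := (ell_getD_at (k := k) u v B).1
  have hplen := (ell_getD_at (k := k) u v B).2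
  have hpE : (u.flatMap (seg k)).length ∈ (CG k (ell k (u ++ (B + 1) :: v))).E := by
    show _ ∈ Finset.range _
    rw [Finset.mem_range]
    exact hplen
  obtain ⟨e₀, he₀', hfee₀⟩ := hfE.surjOn (Finset.mem_coe.mpr hpE)
  have he₀ : e₀ ∈ g.E := Finset.mem_coe.mp he₀'
  have hlabe : g.lab e₀ = Sum.inr B := by
    rw [← hlab e₀ he₀, hfee₀]
    exact labF_succcase hgd
  obtain ⟨aa, haa⟩ := hT e₀ he₀
  rw [hlabe] at haa
  exact absurd haa (by simp)

lemma inv_along (hn : 1 ≤ n) (hk : 0 < k) {g : HGraph (Bool ⊕ ℕ)}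
    (hR : Relation.ReflTransGen (Gr n k).Derive (Gr n k).S g) : ∃ w, InvW n k g w := by
  induction hR with
  | refl => exact ⟨[n + 1], InvW_base hn hk⟩
  | tail hR hD ih =>
    obtain ⟨w, hI⟩ := ih
    obtain ⟨w', hI', _⟩ := step hn hk hI hD
    exact ⟨w', hI'⟩

end CombAux5
/-- There is a constant `c` such that for all `n, k ≥ 1`
there is an SL-HR grammar `G` with `val(G)` isomorphic to
`g_{n,k} = t-graph(s_{n,k})` and `|G| ≤ c·(k² + n)`. -/
theorem comb_has_small_grammar :
    ∃ c : ℕ, ∀ n k : ℕ, 1 ≤ n → 1 ≤ k →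
      ∃ G : HRGrammar Bool,
        G.WF (fun b => if b then k + 1 else 1) ∧ G.SL ∧ G.Lang.Nonempty ∧
        (∀ g ∈ G.Lang, ∃ g₀ : HGraph (Bool ⊕ ℕ),
          IsTGraphOf (combRk k) (combTree n k) g₀ ∧ g.Isomorphic g₀) ∧
        G.size ≤ c * (k ^ 2 + n) := by
  refine ⟨11, ?_⟩
  intro n k hn hk
  refine ⟨Gr n k, Gr_WF hn hk, Gr_SL hn, ?_, ?_, Gr_size hn hk⟩
  · obtain ⟨gT, wT, hRT, hIT, h0T⟩ :=
      reach hn hk (muF [n + 1]) [n + 1] (Gr n k).S le_rfl (InvW_base hn hk)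
    exact ⟨gT, hRT, (terminal_of_allzero hk hIT h0T).1⟩
  · intro g hg
    obtain ⟨hR, hT⟩ := hg
    obtain ⟨w, hI⟩ := inv_along hn hk hR
    have h0 := allzero_of_terminal hI hT
    exact ⟨gComb n k, gComb_tgraph hk, (terminal_of_allzero hk hI h0).2⟩
end

section
/- Define the triangle fractal graphs by: tf₁ is the complete graph on 3 nodes; and for i ≥ 1, tf_{i+1} is obtained from tf_i by letting X be the set of edges of tf_i incident with at least one node of degree 2 and, for each edge e ∈ X, adding a fresh node v_e together with two new edges joining v_e to the two endpoints of e. Then for every n ≥ 1, tf_n has exactly 2^n + 2^{n−1} nodes and exactly 2·(2^n + 2^{n−1}) − 3 edges. -/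
/-- A finite graph: a finite set of nodes and a finite set of edges, each
edge being a two-element set of nodes. -/
structure FGraph where
  V : Finset ℕ
  E : Finset (Finset ℕ)

namespace FGraph

/-- Well-formedness: every edge joins two distinct nodes of the graph. -/
def WF (g : FGraph) : Prop := ∀ e ∈ g.E, e.card = 2 ∧ e ⊆ g.V

/-- The degree of a node: the number of edges incident with it. -/
def degree (g : FGraph) (v : ℕ) : ℕ := (g.E.filter fun e => v ∈ e).card

/-- The set `X` of edges incident with at least one node of degree 2. -/
def tfX (g : FGraph) : Finset (Finset ℕ) :=
  g.E.filter fun e => ∃ v ∈ e, g.degree v = 2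

/-- One triangle-fractal step: for each edge `e` incident with a node of
degree 2, add a fresh node `ν e` together with two new edges joining `ν e`
to the two endpoints of `e`. -/
def TFStep (g g' : FGraph) : Prop :=
  ∃ ν : Finset ℕ → ℕ,
    Set.InjOn ν ↑g.tfX ∧ (∀ e ∈ g.tfX, ν e ∉ g.V) ∧
    g'.V = g.V ∪ g.tfX.image ν ∧
    g'.E = g.E ∪ g.tfX.biUnion fun e => e.image fun v => insert (ν e) {v}

end FGraph

/-- `IsTF n g`: `g` is the triangle fractal `tf_n`; `tf₁` is the complete
graph on 3 nodes, and `tf_{i+1}` is obtained from `tf_i` by a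
triangle-fractal step. -/
inductive IsTF : ℕ → FGraph → Prop
  | base (g : FGraph) (hV : g.V = {0, 1, 2})
      (hE : g.E = {({0, 1} : Finset ℕ), {0, 2}, {1, 2}}) : IsTF 1 g
  | step (n : ℕ) (g g' : FGraph) (h : IsTF n g) (hs : FGraph.TFStep g g') :
      IsTF (n + 1) g'


namespace FGraph

private lemma degree_mono {g g' : FGraph} (h : g.E ⊆ g'.E) (v : ℕ) :
    g.degree v ≤ g'.degree v :=
  Finset.card_le_card (Finset.filter_subset_filter _ h)

private theorem step_inv {g g' : FGraph} (hwf : g.WF)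
    (hdeg : ∀ v ∈ g.V, 2 ≤ g.degree v) (hs : g.TFStep g') :
    g'.WF ∧ (∀ v ∈ g'.V, 2 ≤ g'.degree v) ∧
    g'.V.card = g.V.card + g.tfX.card ∧
    g'.E.card = g.E.card + 2 * g.tfX.card ∧
    g'.tfX.card = 2 * g.tfX.card := by
  obtain ⟨ν, hinj, hfresh, hV, hE⟩ := hs
  have hXE : ∀ e ∈ g.tfX, e ∈ g.E := fun e he => (Finset.mem_filter.1 he).1
  have hXcard : ∀ e ∈ g.tfX, e.card = 2 := fun e he => (hwf e (hXE e he)).1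
  have hXsub : ∀ e ∈ g.tfX, e ⊆ g.V := fun e he => (hwf e (hXE e he)).2
  set newE := g.tfX.biUnion (fun e => e.image fun v => insert (ν e) ({v} : Finset ℕ)) with hnewE
  have hmem_newE : ∀ f, f ∈ newE ↔ ∃ e ∈ g.tfX, ∃ v ∈ e, f = insert (ν e) ({v} : Finset ℕ) := by
    intro f; simp [hnewE, eq_comm]
  have hnu_ne : ∀ e ∈ g.tfX, ∀ v ∈ g.V, ν e ≠ v :=
    fun e he v hv h => hfresh e he (h ▸ hv)
  have hdisj : Disjoint g.E newE := by
    rw [Finset.disjoint_left]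
    intro f hf hf'
    obtain ⟨e, he, v, hv, rfl⟩ := (hmem_newE f).1 hf'
    exact hfresh e he ((hwf _ hf).2 (Finset.mem_insert_self _ _))
  have hpair : ∀ e ∈ g.tfX, ∀ e' ∈ g.tfX, ∀ v ∈ e, ∀ w ∈ e',
      (insert (ν e) {v} : Finset ℕ) = insert (ν e') ({w} : Finset ℕ) → e = e' ∧ v = w := by
    intro e he e' he' v hv w hw h
    have hvV : v ∈ g.V := hXsub e he hv
    have hwV : w ∈ g.V := hXsub e' he' hw
    have h1 : ν e = ν e' := by
      have hm : ν e ∈ (insert (ν e') {w} : Finset ℕ) := h ▸ Finset.mem_insert_self _ _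
      rcases Finset.mem_insert.1 hm with h2 | h2
      · exact h2
      · exact absurd (Finset.mem_singleton.1 h2) (hnu_ne e he w hwV)
    have h2 : v = w := by
      have hm : v ∈ (insert (ν e') {w} : Finset ℕ) := by rw [← h]; simp
      rcases Finset.mem_insert.1 hm with h3 | h3
      · exact absurd h3.symm (hnu_ne e' he' v hvV)
      · exact Finset.mem_singleton.1 h3
    exact ⟨hinj (Finset.mem_coe.2 he) (Finset.mem_coe.2 he') h1, h2⟩
  have hcard_newE : newE.card = 2 * g.tfX.card := by
    rw [hnewE, Finset.card_biUnion]
    · have hc : ∀ e ∈ g.tfX, (e.image fun v => insert (ν e) ({v} : Finset ℕ)).card = 2 := by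
        intro e he
        rw [Finset.card_image_of_injOn fun v hv w hw h =>
          (hpair e he e he v hv w hw h).2, hXcard e he]
      rw [Finset.sum_congr rfl hc]
      simp [mul_comm]
    · intro e he e' he' hne
      rw [Function.onFun, Finset.disjoint_left]
      intro f hf hf'
      simp only [Finset.mem_image] at hf hf'
      obtain ⟨v, hv, rfl⟩ := hf
      obtain ⟨w, hw, h⟩ := hf'
      exact hne ((hpair e' he' e he w hw v hv h).1).symm
  have hVdisj : Disjoint g.V (g.tfX.image ν) := by
    rw [Finset.disjoint_right]; intro a ha hav
    obtain ⟨e, he, rfl⟩ := Finset.mem_image.1 ha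
    exact hfresh e he hav
  have hVcard : g'.V.card = g.V.card + g.tfX.card := by
    rw [hV, Finset.card_union_of_disjoint hVdisj, Finset.card_image_of_injOn hinj]
  have hEcard : g'.E.card = g.E.card + 2 * g.tfX.card := by
    rw [hE, Finset.card_union_of_disjoint hdisj, hcard_newE]
  have hwf' : g'.WF := by
    intro f hf
    rw [hE] at hf
    rcases Finset.mem_union.1 hf with hf | hf
    · obtain ⟨h1, h2⟩ := hwf f hf
      exact ⟨h1, h2.trans (hV ▸ Finset.subset_union_left)⟩
    · obtain ⟨e, he, v, hv, rfl⟩ := (hmem_newE f).1 hf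
      have hvV := hXsub e he hv
      constructor
      · rw [Finset.card_insert_of_notMem (by simp [hnu_ne e he v hvV]),
          Finset.card_singleton]
      · intro x hx
        rcases Finset.mem_insert.1 hx with rfl | hx
        · rw [hV]; exact Finset.mem_union_right _ (Finset.mem_image_of_mem ν he)
        · rw [Finset.mem_singleton.1 hx, hV]; exact Finset.mem_union_left _ hvV
  have hdeg_old : ∀ w, g'.degree w = g.degree w + (newE.filter fun f => w ∈ f).card := by
    intro w
    unfold FGraph.degree
    rw [hE, Finset.filter_union,
      Finset.card_union_of_disjoint (Finset.disjoint_filter_filter hdisj)]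
  have hdeg2 : ∀ w ∈ g.V, g.degree w = 2 → 2 ≤ (newE.filter fun f => w ∈ f).card := by
    intro w hwV hw2
    have hsub : (g.E.filter fun e => w ∈ e).image (fun e => insert (ν e) ({w} : Finset ℕ)) ⊆
        newE.filter fun f => w ∈ f := by
      intro f hf
      obtain ⟨e, he, rfl⟩ := Finset.mem_image.1 hf
      obtain ⟨heE, hwe⟩ := Finset.mem_filter.1 he
      have heX : e ∈ g.tfX := Finset.mem_filter.2 ⟨heE, w, hwe, hw2⟩
      exact Finset.mem_filter.2 ⟨(hmem_newE _).2 ⟨e, heX, w, hwe, rfl⟩, by simp⟩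
    calc 2 = (g.E.filter fun e => w ∈ e).card := hw2.symm
    _ = ((g.E.filter fun e => w ∈ e).image (fun e => insert (ν e) ({w} : Finset ℕ))).card := by
        rw [Finset.card_image_of_injOn]
        intro e he e' he' h
        obtain ⟨heE, hwe⟩ := Finset.mem_filter.1 (Finset.mem_coe.1 he)
        obtain ⟨heE', hwe'⟩ := Finset.mem_filter.1 (Finset.mem_coe.1 he')
        exact (hpair e (Finset.mem_filter.2 ⟨heE, w, hwe, hw2⟩)
          e' (Finset.mem_filter.2 ⟨heE', w, hwe', hw2⟩) w hwe w hwe' h).1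
    _ ≤ _ := Finset.card_le_card hsub
  have hold_ne2 : ∀ w ∈ g.V, g'.degree w ≠ 2 := by
    intro w hwV
    rcases eq_or_lt_of_le (hdeg w hwV) with h2 | h3
    · have := hdeg2 w hwV h2.symm
      rw [hdeg_old w]; omega
    · rw [hdeg_old w]; omega
  have hdeg_new : ∀ e ∈ g.tfX, g'.degree (ν e) = 2 := by
    intro e he
    have hfe : g'.E.filter (fun f => ν e ∈ f) = e.image fun v => insert (ν e) ({v} : Finset ℕ) := by
      ext f
      simp only [Finset.mem_filter, Finset.mem_image]
      constructor
      · rintro ⟨hf, hin⟩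
        rw [hE] at hf
        rcases Finset.mem_union.1 hf with hf | hf
        · exact absurd ((hwf f hf).2 hin) (hfresh e he)
        · obtain ⟨e', he', v, hv, rfl⟩ := (hmem_newE f).1 hf
          rcases Finset.mem_insert.1 hin with h | h
          · have heq : e' = e := hinj (Finset.mem_coe.2 he') (Finset.mem_coe.2 he) h.symm
            subst heq; exact ⟨v, hv, rfl⟩
          · exact absurd (Finset.mem_singleton.1 h) (hnu_ne e he v (hXsub e' he' hv))
      · rintro ⟨v, hv, rfl⟩
        exact ⟨hE ▸ Finset.mem_union_right _ ((hmem_newE _).2 ⟨e, he, v, hv, rfl⟩),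
          Finset.mem_insert_self _ _⟩
    unfold FGraph.degree
    rw [hfe, Finset.card_image_of_injOn fun v hv w hw h =>
      (hpair e he e he v hv w hw h).2, hXcard e he]
  have htfX' : g'.tfX = newE := by
    ext f
    simp only [FGraph.tfX, Finset.mem_filter]
    constructor
    · rintro ⟨hf, v, hv, hv2⟩
      rw [hE] at hf
      rcases Finset.mem_union.1 hf with hf | hf
      · exact absurd hv2 (hold_ne2 v ((hwf f hf).2 hv))
      · exact hf
    · intro hf
      obtain ⟨e, he, v, hv, rfl⟩ := (hmem_newE f).1 hf
      exact ⟨hE ▸ Finset.mem_union_right _ hf, ν e, Finset.mem_insert_self _ _,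
        hdeg_new e he⟩
  have hdeg' : ∀ v ∈ g'.V, 2 ≤ g'.degree v := by
    intro v hv
    rw [hV] at hv
    rcases Finset.mem_union.1 hv with hv | hv
    · exact le_trans (hdeg v hv) (degree_mono (hE ▸ Finset.subset_union_left) v)
    · obtain ⟨e, he, rfl⟩ := Finset.mem_image.1 hv
      exact (hdeg_new e he).ge
  exact ⟨hwf', hdeg', hVcard, hEcard, by rw [htfX', hcard_newE]⟩

end FGraph

private theorem tf_inv (n : ℕ) (g : FGraph) (h : IsTF n g) :
    1 ≤ n ∧ g.WF ∧ (∀ v ∈ g.V, 2 ≤ g.degree v) ∧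
    g.tfX.card = 3 * 2 ^ (n - 1) ∧ g.V.card = 3 * 2 ^ (n - 1) ∧
    g.E.card = 3 * 2 ^ n - 3 := by
  induction h with
  | base g hV hE =>
    refine ⟨le_refl 1, ?_, ?_, ?_, ?_, ?_⟩ <;>
      simp only [FGraph.WF, FGraph.degree, FGraph.tfX, hV, hE] <;> decide
  | step n g g' h hs ih =>
    obtain ⟨hn, hwf, hdeg, hX, hVc, hEc⟩ := ih
    obtain ⟨hwf', hdeg', hVc', hEc', hX'⟩ := FGraph.step_inv hwf hdeg hs
    have hp : 2 ^ n = 2 * 2 ^ (n - 1) := by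
      conv_lhs => rw [← Nat.sub_add_cancel hn]
      rw [pow_succ]; ring
    have hp2 : 2 ^ (n + 1) = 2 * 2 ^ n := by rw [pow_succ]; ring
    have h1 : (1 : ℕ) ≤ 2 ^ (n - 1) := Nat.one_le_two_pow
    have hp3 : 2 ^ (n + 1 - 1) = 2 ^ n := by norm_num
    refine ⟨by omega, hwf', hdeg', ?_, ?_, ?_⟩ <;> omega

/-- For every `n ≥ 1`, the triangle fractal `tf_n` has
exactly `2^n + 2^{n-1}` nodes and exactly `2·(2^n + 2^{n-1}) − 3` edges. -/
theorem triangle_fractal_size (n : ℕ) (hn : 1 ≤ n) (g : FGraph)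
    (h : IsTF n g) :
    g.V.card = 2 ^ n + 2 ^ (n - 1) ∧
    g.E.card = 2 * (2 ^ n + 2 ^ (n - 1)) - 3 := by
  obtain ⟨hn', hwf, hdeg, hX, hVc, hEc⟩ := tf_inv n g h
  have hp : 2 ^ n = 2 * 2 ^ (n - 1) := by
    conv_lhs => rw [← Nat.sub_add_cancel hn]
    rw [pow_succ]; ring
  have h1 : (1 : ℕ) ≤ 2 ^ (n - 1) := Nat.one_le_two_pow
  constructor <;> omega
end
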